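/- arXiv:1210.1944 — 3 statements merged into one kernel-verified Lean document; each statement's English description precedes it below -/
import Mathlib

section
/- Let H be a Hilbert space and let (f_m)_{m ∈ ℤ} be a family of elements of H that is quasi-orthogonal with gap ℓ, i.e., ⟨f_m, f_{m'}⟩ = 0 whenever |m - m'| ≥ ℓ. Assume only finitely many f_m are nonzero (or the relevant sums converge). Then ‖∑_{m ∈ ℤ} f_m‖² ≤ (2ℓ+1) · ∑_{m ∈ ℤ} ‖f_m‖². -/
/-- Quasi-orthogonal system bound in a Hilbert space. -/
theorem quasi_orthogonal_sum_sq_le {H : Type*} [NormedAddCommGroup H]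
    [InnerProductSpace ℝ H] (f : ℤ → H) (ℓ : ℕ)
    (hfin : (Function.support f).Finite)
    (horth : ∀ m m' : ℤ, (ℓ : ℤ) ≤ |m - m'| → (inner ℝ (f m) (f m') : ℝ) = 0) :
    ‖∑ᶠ m, f m‖ ^ 2 ≤ (2 * (ℓ : ℝ) + 1) * ∑ᶠ m, ‖f m‖ ^ 2 := by
  classical
  set s := hfin.toFinset with hs
  have h1 : ∑ᶠ m, f m = ∑ m ∈ s, f m := finsum_eq_sum f hfin
  have h2 : ∑ᶠ m, ‖f m‖ ^ 2 = ∑ m ∈ s, ‖f m‖ ^ 2 := by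
    apply finsum_eq_sum_of_support_subset
    intro x hx
    simp only [Function.mem_support] at hx
    have : f x ≠ 0 := by
      intro h; apply hx; simp [h]
    simpa [hs] using this
  rw [h1, h2]
  have hsq : ‖∑ m ∈ s, f m‖ ^ 2 = ∑ m ∈ s, ∑ m' ∈ s, (inner ℝ (f m) (f m') : ℝ) := by
    rw [← real_inner_self_eq_norm_sq, sum_inner]
    exact Finset.sum_congr rfl fun m _ => inner_sum s f (f m)
  rw [hsq]
  -- termwise bound
  have hterm : ∀ m ∈ s, ∀ m' ∈ s, (inner ℝ (f m) (f m') : ℝ) ≤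
      (if |m - m'| < (ℓ : ℤ) then (‖f m‖ ^ 2 + ‖f m'‖ ^ 2) / 2 else 0) := by
    intro m _ m' _
    by_cases h : |m - m'| < (ℓ : ℤ)
    · rw [if_pos h]
      have h1 := real_inner_le_norm (f m) (f m')
      nlinarith [sq_nonneg (‖f m‖ - ‖f m'‖)]
    · rw [if_neg h, horth m m' (le_of_not_gt h)]
  have step1 : ∑ m ∈ s, ∑ m' ∈ s, (inner ℝ (f m) (f m') : ℝ) ≤
      ∑ m ∈ s, ∑ m' ∈ s, (if |m - m'| < (ℓ : ℤ) then (‖f m‖ ^ 2 + ‖f m'‖ ^ 2) / 2 else 0) :=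
    Finset.sum_le_sum fun m hm => Finset.sum_le_sum fun m' hm' => hterm m hm m' hm'
  -- symmetrize
  have hsym : ∑ m ∈ s, ∑ m' ∈ s, (if |m - m'| < (ℓ : ℤ) then (‖f m‖ ^ 2 + ‖f m'‖ ^ 2) / 2 else 0)
      = ∑ m ∈ s, ∑ m' ∈ s, (if |m - m'| < (ℓ : ℤ) then ‖f m‖ ^ 2 else 0) := by
    have e1 : ∀ m m' : ℤ, (if |m - m'| < (ℓ : ℤ) then (‖f m‖ ^ 2 + ‖f m'‖ ^ 2) / 2 else 0)
        = (if |m - m'| < (ℓ : ℤ) then ‖f m‖ ^ 2 / 2 else 0)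
          + (if |m - m'| < (ℓ : ℤ) then ‖f m'‖ ^ 2 / 2 else 0) := by
      intro m m'; split <;> ring
    simp_rw [e1, Finset.sum_add_distrib]
    have e2 : ∑ m ∈ s, ∑ m' ∈ s, (if |m - m'| < (ℓ : ℤ) then ‖f m'‖ ^ 2 / 2 else 0)
        = ∑ m ∈ s, ∑ m' ∈ s, (if |m - m'| < (ℓ : ℤ) then ‖f m‖ ^ 2 / 2 else 0) := by
      rw [Finset.sum_comm]
      refine Finset.sum_congr rfl fun m _ => Finset.sum_congr rfl fun m' _ => ?_
      rw [abs_sub_comm]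
    rw [e2, ← Finset.sum_add_distrib]
    refine Finset.sum_congr rfl fun m _ => ?_
    rw [← Finset.sum_add_distrib]
    refine Finset.sum_congr rfl fun m' _ => ?_
    split <;> ring
  -- count bound
  have hcount : ∀ m : ℤ, ∑ m' ∈ s, (if |m - m'| < (ℓ : ℤ) then ‖f m‖ ^ 2 else 0)
      ≤ (2 * (ℓ : ℝ) + 1) * ‖f m‖ ^ 2 := by
    intro m
    rw [← Finset.sum_filter]
    have hsub : s.filter (fun m' => |m - m'| < (ℓ : ℤ)) ⊆ Finset.Icc (m - ℓ) (m + ℓ) := by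
      intro x hx
      simp only [Finset.mem_filter] at hx
      have := hx.2
      rw [abs_lt] at this
      simp only [Finset.mem_Icc]
      omega
    have hcard : ((s.filter (fun m' => |m - m'| < (ℓ : ℤ))).card : ℝ) ≤ 2 * (ℓ : ℝ) + 1 := by
      have h3 := Finset.card_le_card hsub
      have h4 : (Finset.Icc (m - ℓ) (m + ℓ)).card = 2 * ℓ + 1 := by
        rw [Int.card_Icc]
        omega
      have : (s.filter (fun m' => |m - m'| < (ℓ : ℤ))).card ≤ 2 * ℓ + 1 := by omega
      exact_mod_cast this
    rw [Finset.sum_const, nsmul_eq_mul]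
    exact mul_le_mul_of_nonneg_right hcard (sq_nonneg _)
  calc ∑ m ∈ s, ∑ m' ∈ s, (inner ℝ (f m) (f m') : ℝ)
      ≤ ∑ m ∈ s, ∑ m' ∈ s, (if |m - m'| < (ℓ : ℤ) then ‖f m‖ ^ 2 else 0) := by
        rw [← hsym]; exact step1
    _ ≤ ∑ m ∈ s, (2 * (ℓ : ℝ) + 1) * ‖f m‖ ^ 2 := Finset.sum_le_sum fun m _ => hcount m
    _ = (2 * (ℓ : ℝ) + 1) * ∑ m ∈ s, ‖f m‖ ^ 2 := by rw [Finset.mul_sum]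
end

section
/- Let p ∈ [1, ∞], let ℓ₁ ≤ m₁ and ℓ₂ ≤ m₂ be integers, and let (g_{k₁,k₂})_{(k₁,k₂) ∈ ℤ²} be measurable functions on ℝ² satisfying |g_{k₁,k₂}(x)| ≤ C₀ / ((1 + 2^{ℓ₁}|x₁ − 2^{−m₁}k₁|)² (1 + 2^{ℓ₂}|x₂ − 2^{−m₂}k₂|)²) for all x = (x₁,x₂) and some C₀ > 0. Let (d_{k₁,k₂}) ∈ ℓ^p(ℤ²) and set F = ∑_{(k₁,k₂) ∈ ℤ²} d_{k₁,k₂} g_{k₁,k₂}. Then there exists C > 0 depending only on C₀ and p such that ‖F‖_{L^p(ℝ²)} ≤ C · 2^{−(m₁+m₂)/p} · 2^{m₁−ℓ₁} · 2^{m₂−ℓ₂} · (∑_{(k₁,k₂)} |d_{k₁,k₂}|^p)^{1/p}. -/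
open MeasureTheory Set
open scoped ENNReal
open MeasureTheory Set
open scoped ENNReal

-- sum of 1/(1+i)^2 bounded
lemma molecule_sum_inv_sq (N : ℕ) :
    ∑ i ∈ Finset.range N, ((1 + (i:ℝ))^2)⁻¹ ≤ 2 - 2/((N:ℝ)+1) := by
  induction N with
  | zero => norm_num
  | succ N ih =>
    rw [Finset.sum_range_succ]
    have h1 : (0:ℝ) < (N:ℝ) + 1 := by positivity
    have h2 : (0:ℝ) < (N:ℝ) + 2 := by positivity
    have key : ((1 + (N:ℝ))^2)⁻¹ ≤ 2/((N:ℝ)+1) - 2/((N:ℝ)+2) := by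
      rw [div_sub_div _ _ h1.ne' h2.ne', inv_eq_one_div, div_le_div_iff₀ (by positivity) (by positivity)]
      nlinarith [sq_nonneg ((N:ℝ))]
    push_cast
    push_cast at ih
    have h3 : 2/((N:ℝ)+1+1) = 2/((N:ℝ)+2) := by ring_nf
    linarith

lemma molecule_tsum_inv_sq :
    ∑' n : ℕ, ENNReal.ofReal ((1 + (n:ℝ))^2)⁻¹ ≤ 2 := by
  rw [ENNReal.tsum_eq_iSup_nat]
  refine iSup_le fun N => ?_
  rw [← ENNReal.ofReal_sum_of_nonneg (fun i _ => by positivity)]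
  calc ENNReal.ofReal (∑ i ∈ Finset.range N, ((1 + (i:ℝ))^2)⁻¹)
      ≤ ENNReal.ofReal 2 := ENNReal.ofReal_le_ofReal
        ((molecule_sum_inv_sq N).trans (by
          have : (0:ℝ) ≤ 2/((N:ℝ)+1) := by positivity
          linarith))
    _ = 2 := by simp

lemma molecule_lintegral_bound (s y : ℝ) (hs : 0 < s) :
    ∫⁻ x : ℝ, ENNReal.ofReal ((1 + s * |x - y|)^2)⁻¹ ≤ ENNReal.ofReal (4/s) := by
  set A : ℕ → Set ℝ := fun n => {x | (n:ℝ) ≤ s * |x - y| ∧ s * |x - y| < n + 1} with hA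
  have hmeasf : Measurable fun x : ℝ => s * |x - y| :=
    (measurable_id.sub measurable_const).abs.const_mul s
  have hmeas : ∀ n, MeasurableSet (A n) := fun n =>
    hmeasf measurableSet_Ico
  have hvol : ∀ n, volume (A n) ≤ 2 * ENNReal.ofReal s⁻¹ := by
    intro n
    have hsub : A n ⊆ Icc (y + n/s) (y + (n+1)/s) ∪ Icc (y - (n+1)/s) (y - n/s) := by
      rintro x ⟨h1, h2⟩
      rcases le_total y x with hyx | hxy
      · left
        rw [abs_of_nonneg (by linarith)] at h1 h2
        constructor
        · have h := (div_le_iff₀ hs).mpr (show (n:ℝ) ≤ (x - y) * s by linarith)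
          linarith
        · have h := (le_div_iff₀ hs).mpr (show (x - y) * s ≤ (n:ℝ)+1 by linarith)
          linarith
      · right
        rw [abs_of_nonpos (by linarith), neg_sub] at h1 h2
        constructor
        · have h := (le_div_iff₀ hs).mpr (show (y - x) * s ≤ (n:ℝ)+1 by linarith)
          linarith
        · have h := (div_le_iff₀ hs).mpr (show (n:ℝ) ≤ (y - x) * s by linarith)
          linarith
    calc volume (A n) ≤ volume (Icc (y + n/s) (y + (n+1)/s)) + volume (Icc (y - (n+1)/s) (y - n/s)) :=
          (measure_mono hsub).trans (measure_union_le _ _)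
      _ ≤ 2 * ENNReal.ofReal s⁻¹ := by
          rw [Real.volume_Icc, Real.volume_Icc, two_mul]
          have e1 : y + ((n:ℝ)+1)/s - (y + (n:ℝ)/s) = s⁻¹ := by field_simp; ring
          have e2 : y - (n:ℝ)/s - (y - ((n:ℝ)+1)/s) = s⁻¹ := by field_simp; ring
          rw [e1, e2]
  have hpt : ∀ x : ℝ, ENNReal.ofReal ((1 + s * |x - y|)^2)⁻¹ ≤
      ∑' n : ℕ, (A n).indicator (fun _ => ENNReal.ofReal ((1 + (n:ℝ))^2)⁻¹) x := by
    intro x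
    have h0 : 0 ≤ s * |x - y| := by positivity
    have hx : x ∈ A (⌊s * |x - y|⌋₊) := ⟨Nat.floor_le h0, Nat.lt_floor_add_one _⟩
    calc ENNReal.ofReal ((1 + s * |x - y|)^2)⁻¹
        ≤ (A ⌊s * |x - y|⌋₊).indicator (fun _ => ENNReal.ofReal ((1 + (⌊s * |x - y|⌋₊:ℝ))^2)⁻¹) x := by
          rw [Set.indicator_of_mem hx]
          apply ENNReal.ofReal_le_ofReal
          have hb : (1 + (⌊s * |x - y|⌋₊:ℝ)) ≤ 1 + s * |x - y| := by
            linarith [Nat.floor_le h0]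
          have hp1 : (0:ℝ) < 1 + (⌊s * |x - y|⌋₊:ℝ) := by positivity
          gcongr
      _ ≤ ∑' n : ℕ, (A n).indicator (fun _ => ENNReal.ofReal ((1 + (n:ℝ))^2)⁻¹) x :=
          ENNReal.le_tsum _
  calc ∫⁻ x : ℝ, ENNReal.ofReal ((1 + s * |x - y|)^2)⁻¹
      ≤ ∫⁻ x : ℝ, ∑' n : ℕ, (A n).indicator (fun _ => ENNReal.ofReal ((1 + (n:ℝ))^2)⁻¹) x :=
        lintegral_mono hpt
    _ = ∑' n : ℕ, ∫⁻ x : ℝ, (A n).indicator (fun _ => ENNReal.ofReal ((1 + (n:ℝ))^2)⁻¹) x :=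
        lintegral_tsum fun n => ((measurable_const.indicator (hmeas n)).aemeasurable)
    _ = ∑' n : ℕ, ENNReal.ofReal ((1 + (n:ℝ))^2)⁻¹ * volume (A n) := by
        refine tsum_congr fun n => ?_
        rw [lintegral_indicator (hmeas n), setLIntegral_const]
    _ ≤ ∑' n : ℕ, ENNReal.ofReal ((1 + (n:ℝ))^2)⁻¹ * (2 * ENNReal.ofReal s⁻¹) := by
        gcongr with n
        exact hvol n
    _ = (∑' n : ℕ, ENNReal.ofReal ((1 + (n:ℝ))^2)⁻¹) * (2 * ENNReal.ofReal s⁻¹) :=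
        ENNReal.tsum_mul_right
    _ ≤ 2 * (2 * ENNReal.ofReal s⁻¹) := by
        gcongr
        exact molecule_tsum_inv_sq
    _ = ENNReal.ofReal (4/s) := by
        rw [div_eq_mul_inv, ENNReal.ofReal_mul (by norm_num)]
        rw [← mul_assoc]
        norm_num

lemma molecule_tsum_grid_bound (t y : ℝ) (ht : 0 < t) (ht1 : t ≤ 1) :
    ∑' k : ℤ, ENNReal.ofReal ((1 + t * |y - k|)^2)⁻¹ ≤ ENNReal.ofReal (16/t) := by
  have key : ∀ k : ℤ, ENNReal.ofReal ((1 + t * |y - k|)^2)⁻¹ ≤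
      ∫⁻ x in Ico (k:ℝ) (k+1), 4 * ENNReal.ofReal ((1 + t * |x - y|)^2)⁻¹ := by
    intro k
    have h1 : ENNReal.ofReal ((1 + t * |y - k|)^2)⁻¹
        = ∫⁻ _ in Ico (k:ℝ) (k+1), ENNReal.ofReal ((1 + t * |y - k|)^2)⁻¹ := by
      rw [setLIntegral_const, Real.volume_Ico]
      simp
    rw [h1]
    refine setLIntegral_mono (by measurability) fun x hx => ?_
    have hxk : |x - k| ≤ 1 := by
      rcases hx with ⟨ha, hb⟩
      rw [abs_of_nonneg (by linarith)]
      linarith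
    have htri : |x - y| ≤ |y - (k:ℝ)| + 1 := by
      have h := abs_sub_le x (k:ℝ) y
      rw [abs_sub_comm (k:ℝ) y] at h
      linarith
    have hb : 1 + t * |x - y| ≤ 2 * (1 + t * |y - k|) := by
      have h2 : t * |x - y| ≤ t * |y - (k:ℝ)| + t := by
        nlinarith [abs_nonneg (y - (k:ℝ))]
      nlinarith [abs_nonneg (y - (k:ℝ)), mul_nonneg ht.le (abs_nonneg (y - (k:ℝ)))]
    have hpos1 : (0:ℝ) < 1 + t * |x - y| := by positivity
    have hpos2 : (0:ℝ) < 1 + t * |y - k| := by positivity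
    calc ENNReal.ofReal ((1 + t * |y - k|)^2)⁻¹
        ≤ ENNReal.ofReal (4 * ((1 + t * |x - y|)^2)⁻¹) := by
          apply ENNReal.ofReal_le_ofReal
          have hsq : (1 + t * |x - y|)^2 ≤ 4 * (1 + t * |y - (k:ℝ)|)^2 := by nlinarith
          calc ((1 + t * |y - (k:ℝ)|)^2)⁻¹ = 4 / (4 * (1 + t * |y - (k:ℝ)|)^2) := by
                rw [eq_div_iff (by positivity)]
                field_simp
            _ ≤ 4 / ((1 + t * |x - y|)^2) := by gcongr
            _ = 4 * ((1 + t * |x - y|)^2)⁻¹ := div_eq_mul_inv _ _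
      _ = 4 * ENNReal.ofReal ((1 + t * |x - y|)^2)⁻¹ := by
          rw [ENNReal.ofReal_mul (by norm_num)]
          norm_num
  calc ∑' k : ℤ, ENNReal.ofReal ((1 + t * |y - k|)^2)⁻¹
      ≤ ∑' k : ℤ, ∫⁻ x in Ico (k:ℝ) (k+1), 4 * ENNReal.ofReal ((1 + t * |x - y|)^2)⁻¹ :=
        ENNReal.tsum_le_tsum key
    _ = ∫⁻ x in ⋃ k : ℤ, Ico (k:ℝ) (k+1), 4 * ENNReal.ofReal ((1 + t * |x - y|)^2)⁻¹ := by
        rw [lintegral_iUnion (fun k => measurableSet_Ico) ?_]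
        · intro k j hkj
          simp only [Function.onFun]
          apply Set.disjoint_left.mpr
          rintro x ⟨h1, h2⟩ ⟨h3, h4⟩
          have : k = j := by
            have e1 : (k:ℝ) < j + 1 := lt_of_le_of_lt h1 h4
            have e2 : (j:ℝ) < k + 1 := lt_of_le_of_lt h3 h2
            have f1 : k < j + 1 := by exact_mod_cast e1
            have f2 : j < k + 1 := by exact_mod_cast e2
            omega
          exact hkj this
    _ = ∫⁻ x : ℝ, 4 * ENNReal.ofReal ((1 + t * |x - y|)^2)⁻¹ := by
        rw [iUnion_Ico_intCast, Measure.restrict_univ]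
    _ = 4 * ∫⁻ x : ℝ, ENNReal.ofReal ((1 + t * |x - y|)^2)⁻¹ :=
        lintegral_const_mul' _ _ (by norm_num)
    _ ≤ 4 * ENNReal.ofReal (4/t) := by
        gcongr
        exact molecule_lintegral_bound t y ht
    _ = ENNReal.ofReal (16/t) := by
        rw [show (16:ℝ)/t = 4 * (4/t) by ring, ENNReal.ofReal_mul (by norm_num)]
        norm_num

lemma molecule_tsum_weighted_holder {ι : Type*} {q : ℝ} (hq : 1 ≤ q) (w f : ι → ℝ≥0∞) :
    ∑' i, w i * f i ≤ (∑' i, w i) ^ (1 - q⁻¹) * (∑' i, w i * f i ^ q) ^ q⁻¹ := by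
  have hq0 : 0 < q := lt_of_lt_of_le zero_lt_one hq
  have h1 : 0 ≤ 1 - q⁻¹ := by
    have := inv_le_one_of_one_le₀ hq
    linarith
  rw [ENNReal.tsum_eq_iSup_sum]
  refine iSup_le fun s => ?_
  refine (ENNReal.inner_le_weight_mul_Lp_of_nonneg s hq w f).trans ?_
  gcongr
  · exact ENNReal.sum_le_tsum s
  · exact ENNReal.sum_le_tsum s

lemma molecule_two_zpow_ofReal (n : ℤ) :
    ENNReal.ofReal ((2:ℝ)^n) = (2:ℝ≥0∞)^n := by
  rw [← Real.rpow_intCast 2 n, ← ENNReal.rpow_intCast 2 n,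
    ← ENNReal.ofReal_rpow_of_pos (by norm_num)]
  norm_num

lemma molecule_pow2_combine {q : ℝ} (hq : 1 ≤ q) (ℓ m : ℤ) :
    ((2:ℝ≥0∞)^(m - ℓ))^(1 - q⁻¹) * ((2:ℝ≥0∞)^(-ℓ))^(q⁻¹)
      = (2:ℝ≥0∞)^(m - ℓ) * (2:ℝ≥0∞)^(-(m:ℝ)/q) := by
  have hq0 : q ≠ 0 := by positivity
  rw [← ENNReal.rpow_intCast 2 (m - ℓ), ← ENNReal.rpow_intCast 2 (-ℓ),
    ← ENNReal.rpow_mul, ← ENNReal.rpow_mul,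
    ← ENNReal.rpow_add _ _ (by norm_num) (by norm_num),
    ← ENNReal.rpow_add _ _ (by norm_num) (by norm_num)]
  congr 1
  push_cast
  field_simp
  ring

lemma molecule_dim_sum (ℓ m : ℤ) (hℓ : ℓ ≤ m) (u : ℝ) :
    ∑' k : ℤ, ENNReal.ofReal ((1 + (2:ℝ)^ℓ * |u - (2:ℝ)^(-m) * k|)^2)⁻¹
      ≤ 16 * (2:ℝ≥0∞)^(m - ℓ) := by
  have h2 : (0:ℝ) < (2:ℝ)^(ℓ-m) := zpow_pos two_pos _
  have ht1 : (2:ℝ)^(ℓ-m) ≤ 1 := zpow_le_one_of_nonpos₀ one_le_two (by omega)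
  have hkey : ∀ k : ℤ, (2:ℝ)^ℓ * |u - (2:ℝ)^(-m) * k|
      = (2:ℝ)^(ℓ-m) * |(2:ℝ)^m * u - k| := by
    intro k
    have e1 : (2:ℝ)^(ℓ-m) * (2:ℝ)^m = (2:ℝ)^ℓ := by
      rw [← zpow_add₀ (by norm_num : (2:ℝ) ≠ 0)]
      congr 1
      omega
    have e2 : (2:ℝ)^m * (u - (2:ℝ)^(-m) * k) = (2:ℝ)^m * u - k := by
      rw [mul_sub]
      congr 1
      rw [← mul_assoc, ← zpow_add₀ (by norm_num : (2:ℝ) ≠ 0)]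
      simp
    calc (2:ℝ)^ℓ * |u - (2:ℝ)^(-m) * k|
        = (2:ℝ)^(ℓ-m) * ((2:ℝ)^m * |u - (2:ℝ)^(-m) * k|) := by rw [← mul_assoc, e1]
      _ = (2:ℝ)^(ℓ-m) * |(2:ℝ)^m * u - k| := by
          rw [← abs_of_pos (zpow_pos two_pos m : (0:ℝ) < (2:ℝ)^m), ← abs_mul, e2,
            abs_of_pos (zpow_pos two_pos m : (0:ℝ) < (2:ℝ)^m)]
  calc ∑' k : ℤ, ENNReal.ofReal ((1 + (2:ℝ)^ℓ * |u - (2:ℝ)^(-m) * k|)^2)⁻¹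
      = ∑' k : ℤ, ENNReal.ofReal ((1 + (2:ℝ)^(ℓ-m) * |(2:ℝ)^m * u - k|)^2)⁻¹ := by
        refine tsum_congr fun k => ?_
        rw [hkey k]
    _ ≤ ENNReal.ofReal (16 / (2:ℝ)^(ℓ-m)) := molecule_tsum_grid_bound _ _ h2 ht1
    _ = 16 * (2:ℝ≥0∞)^(m - ℓ) := by
        rw [div_eq_mul_inv, ← zpow_neg, neg_sub, ENNReal.ofReal_mul (by norm_num),
          molecule_two_zpow_ofReal]
        norm_num

lemma molecule_dim_int (ℓ : ℤ) (c : ℝ) :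
    ∫⁻ u : ℝ, ENNReal.ofReal ((1 + (2:ℝ)^ℓ * |u - c|)^2)⁻¹
      ≤ 4 * (2:ℝ≥0∞)^(-ℓ) := by
  calc ∫⁻ u : ℝ, ENNReal.ofReal ((1 + (2:ℝ)^ℓ * |u - c|)^2)⁻¹
      ≤ ENNReal.ofReal (4 / (2:ℝ)^ℓ) := molecule_lintegral_bound _ c (zpow_pos two_pos _)
    _ = 4 * (2:ℝ≥0∞)^(-ℓ) := by
        rw [div_eq_mul_inv, ← zpow_neg, ENNReal.ofReal_mul (by norm_num),
          molecule_two_zpow_ofReal]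
        norm_num

lemma molecule_final {E : ℝ≥0∞} (hE : E ≠ 0) (hEt : E ≠ ⊤) {q : ℝ} (hq : 1 ≤ q)
    (ℓ₁ ℓ₂ m₁ m₂ : ℤ) :
    ((E * (16 * (2:ℝ≥0∞)^(m₁-ℓ₁)) * (16 * (2:ℝ≥0∞)^(m₂-ℓ₂)))^(q-1))^(1/q)
        * (E * (4 * (2:ℝ≥0∞)^(-ℓ₁)) * (4 * (2:ℝ≥0∞)^(-ℓ₂)))^(1/q)
      ≤ E * 4096 * (2:ℝ≥0∞) ^ (-(((m₁:ℝ) + (m₂:ℝ))) / q)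
        * (2:ℝ≥0∞)^(m₁-ℓ₁) * (2:ℝ≥0∞)^(m₂-ℓ₂) := by
  have hq0 : 0 < q := lt_of_lt_of_le zero_lt_one hq
  have hf0 : 0 ≤ q⁻¹ := by positivity
  have hf1 : q⁻¹ ≤ 1 := inv_le_one_of_one_le₀ hq
  have he0 : 0 ≤ 1 - q⁻¹ := by linarith
  have he1 : 1 - q⁻¹ ≤ 1 := by linarith
  have hstepA : ∀ X : ℝ≥0∞, (X^(q-1))^(1/q) = X^(1-q⁻¹) := by
    intro X
    rw [← ENNReal.rpow_mul]
    congr 1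
    field_simp
  rw [hstepA, one_div]
  have hexpand : ∀ (e : ℝ), 0 ≤ e → ∀ (c₁ c₂ : ℤ),
      (E * (16 * (2:ℝ≥0∞)^c₁) * (16 * (2:ℝ≥0∞)^c₂))^e
        = E^e * (16:ℝ≥0∞)^e * ((2:ℝ≥0∞)^c₁)^e * (16:ℝ≥0∞)^e * ((2:ℝ≥0∞)^c₂)^e := by
    intro e he c₁ c₂
    rw [ENNReal.mul_rpow_of_nonneg _ _ he, ENNReal.mul_rpow_of_nonneg _ _ he,
      ENNReal.mul_rpow_of_nonneg _ _ he, ENNReal.mul_rpow_of_nonneg _ _ he]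
    ring
  have hexpand4 : ∀ (e : ℝ), 0 ≤ e → ∀ (c₁ c₂ : ℤ),
      (E * (4 * (2:ℝ≥0∞)^c₁) * (4 * (2:ℝ≥0∞)^c₂))^e
        = E^e * (4:ℝ≥0∞)^e * ((2:ℝ≥0∞)^c₁)^e * (4:ℝ≥0∞)^e * ((2:ℝ≥0∞)^c₂)^e := by
    intro e he c₁ c₂
    rw [ENNReal.mul_rpow_of_nonneg _ _ he, ENNReal.mul_rpow_of_nonneg _ _ he,
      ENNReal.mul_rpow_of_nonneg _ _ he, ENNReal.mul_rpow_of_nonneg _ _ he]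
    ring
  rw [hexpand _ he0, hexpand4 _ hf0]
  have hE1 : E^(1-q⁻¹) * E^(q⁻¹) = E := by
    rw [← ENNReal.rpow_add _ _ hE hEt]
    norm_num
  have h16 : (16:ℝ≥0∞)^(1-q⁻¹) ≤ 16 := by
    calc (16:ℝ≥0∞)^(1-q⁻¹) ≤ (16:ℝ≥0∞)^(1:ℝ) :=
          ENNReal.rpow_le_rpow_of_exponent_le (by norm_num) he1
      _ = 16 := ENNReal.rpow_one _
  have h4 : (4:ℝ≥0∞)^(q⁻¹) ≤ 4 := by
    calc (4:ℝ≥0∞)^(q⁻¹) ≤ (4:ℝ≥0∞)^(1:ℝ) :=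
          ENNReal.rpow_le_rpow_of_exponent_le (by norm_num) hf1
      _ = 4 := ENNReal.rpow_one _
  have hcomb1 := molecule_pow2_combine hq ℓ₁ m₁
  have hcomb2 := molecule_pow2_combine hq ℓ₂ m₂
  have hsplit : (2:ℝ≥0∞) ^ (-((m₁:ℝ))/q) * (2:ℝ≥0∞) ^ (-((m₂:ℝ))/q)
      = (2:ℝ≥0∞) ^ (-(((m₁:ℝ) + (m₂:ℝ))) / q) := by
    rw [← ENNReal.rpow_add _ _ (by norm_num) (by norm_num)]
    congr 1
    field_simp
    ring
  calc E^(1-q⁻¹) * (16:ℝ≥0∞)^(1-q⁻¹) * ((2:ℝ≥0∞)^(m₁-ℓ₁))^(1-q⁻¹) * (16:ℝ≥0∞)^(1-q⁻¹)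
          * ((2:ℝ≥0∞)^(m₂-ℓ₂))^(1-q⁻¹)
        * (E^(q⁻¹) * (4:ℝ≥0∞)^(q⁻¹) * ((2:ℝ≥0∞)^(-ℓ₁))^(q⁻¹) * (4:ℝ≥0∞)^(q⁻¹)
          * ((2:ℝ≥0∞)^(-ℓ₂))^(q⁻¹))
      = (E^(1-q⁻¹) * E^(q⁻¹))
          * ((16:ℝ≥0∞)^(1-q⁻¹) * (16:ℝ≥0∞)^(1-q⁻¹) * (4:ℝ≥0∞)^(q⁻¹) * (4:ℝ≥0∞)^(q⁻¹))
          * (((2:ℝ≥0∞)^(m₁-ℓ₁))^(1-q⁻¹) * ((2:ℝ≥0∞)^(-ℓ₁))^(q⁻¹))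
          * (((2:ℝ≥0∞)^(m₂-ℓ₂))^(1-q⁻¹) * ((2:ℝ≥0∞)^(-ℓ₂))^(q⁻¹)) := by ring
    _ = E * ((16:ℝ≥0∞)^(1-q⁻¹) * (16:ℝ≥0∞)^(1-q⁻¹) * (4:ℝ≥0∞)^(q⁻¹) * (4:ℝ≥0∞)^(q⁻¹))
          * ((2:ℝ≥0∞)^(m₁-ℓ₁) * (2:ℝ≥0∞)^(-(m₁:ℝ)/q))
          * ((2:ℝ≥0∞)^(m₂-ℓ₂) * (2:ℝ≥0∞)^(-(m₂:ℝ)/q)) := by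
        rw [hE1, hcomb1, hcomb2]
    _ ≤ E * ((16:ℝ≥0∞) * 16 * 4 * 4)
          * ((2:ℝ≥0∞)^(m₁-ℓ₁) * (2:ℝ≥0∞)^(-(m₁:ℝ)/q))
          * ((2:ℝ≥0∞)^(m₂-ℓ₂) * (2:ℝ≥0∞)^(-(m₂:ℝ)/q)) := by
        gcongr
    _ = E * 4096 * ((2:ℝ≥0∞) ^ (-((m₁:ℝ))/q) * (2:ℝ≥0∞) ^ (-((m₂:ℝ))/q))
          * (2:ℝ≥0∞)^(m₁-ℓ₁) * (2:ℝ≥0∞)^(m₂-ℓ₂) := by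
        norm_num
        ring
    _ = E * 4096 * (2:ℝ≥0∞) ^ (-(((m₁:ℝ) + (m₂:ℝ))) / q)
          * (2:ℝ≥0∞)^(m₁-ℓ₁) * (2:ℝ≥0∞)^(m₂-ℓ₂) := by
        rw [hsplit]

/-- Frazier–Jawerth type lemma: `L^p` bound for sums of molecules localized on the grid
`2^{-m₁}ℤ × 2^{-m₂}ℤ` with decay at scales `2^{-ℓ₁}, 2^{-ℓ₂}`. -/
theorem molecule_sum_Lp_bound (C₀ : ℝ) (hC₀ : 0 < C₀) (p : ℝ≥0∞) (hp : 1 ≤ p) :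
    ∃ C : ℝ≥0∞, 0 < C ∧ C ≠ ⊤ ∧
      ∀ (ℓ₁ ℓ₂ m₁ m₂ : ℤ), ℓ₁ ≤ m₁ → ℓ₂ ≤ m₂ →
      ∀ g : ℤ × ℤ → ℝ × ℝ → ℝ, (∀ k, Measurable (g k)) →
      (∀ (k : ℤ × ℤ) (x : ℝ × ℝ),
        |g k x| ≤ C₀ / ((1 + (2 : ℝ) ^ ℓ₁ * |x.1 - (2 : ℝ) ^ (-m₁) * k.1|) ^ 2 *
                        (1 + (2 : ℝ) ^ ℓ₂ * |x.2 - (2 : ℝ) ^ (-m₂) * k.2|) ^ 2)) →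
      ∀ d : ℤ × ℤ → ℝ, MemLp d p Measure.count →
      eLpNorm (fun x : ℝ × ℝ => ∑' k : ℤ × ℤ, d k * g k x) p volume ≤
        C * (2 : ℝ≥0∞) ^ (-(((m₁ : ℝ) + (m₂ : ℝ))) / p.toReal) *
          (2 : ℝ≥0∞) ^ (m₁ - ℓ₁) * (2 : ℝ≥0∞) ^ (m₂ - ℓ₂) *
          eLpNorm d p Measure.count := by
  have hE : ENNReal.ofReal C₀ ≠ 0 := (ENNReal.ofReal_pos.mpr hC₀).ne'
  refine ⟨ENNReal.ofReal C₀ * 4096, ?_, ?_, ?_⟩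
  · exact ENNReal.mul_pos hE (by norm_num)
  · exact ENNReal.mul_ne_top ENNReal.ofReal_ne_top (by norm_num)
  intro ℓ₁ ℓ₂ m₁ m₂ hℓ₁ hℓ₂ g hgm hgb d hd
  have hp0 : p ≠ 0 := (lt_of_lt_of_le zero_lt_one hp).ne'
  -- the dominating functions
  set φ₁ : ℤ → ℝ → ℝ≥0∞ :=
    fun k u => ENNReal.ofReal ((1 + (2:ℝ)^ℓ₁ * |u - (2:ℝ)^(-m₁) * k|)^2)⁻¹ with hφ₁def
  set φ₂ : ℤ → ℝ → ℝ≥0∞ :=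
    fun k u => ENNReal.ofReal ((1 + (2:ℝ)^ℓ₂ * |u - (2:ℝ)^(-m₂) * k|)^2)⁻¹ with hφ₂def
  have hφ₁m : ∀ k, Measurable (φ₁ k) := by
    intro k
    apply Measurable.ennreal_ofReal
    measurability
  have hφ₂m : ∀ k, Measurable (φ₂ k) := by
    intro k
    apply Measurable.ennreal_ofReal
    measurability
  set a : ℤ × ℤ → ℝ≥0∞ := fun k => (‖d k‖₊ : ℝ≥0∞) with hadef
  set h : ℤ × ℤ → ℝ × ℝ → ℝ≥0∞ :=
    fun k x => ENNReal.ofReal C₀ * φ₁ k.1 x.1 * φ₂ k.2 x.2 with hhdef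
  have hhm : ∀ k, Measurable (h k) := fun k =>
    (measurable_const.mul ((hφ₁m k.1).comp measurable_fst)).mul
      ((hφ₂m k.2).comp measurable_snd)
  have hgb' : ∀ (k : ℤ×ℤ) (x : ℝ×ℝ), (‖g k x‖₊ : ℝ≥0∞) ≤ h k x := by
    intro k x
    rw [← enorm_eq_nnnorm, ← ofReal_norm, Real.norm_eq_abs]
    refine (ENNReal.ofReal_le_ofReal (hgb k x)).trans ?_
    rw [div_eq_mul_inv, mul_inv, ← mul_assoc,
      ENNReal.ofReal_mul (by positivity), ENNReal.ofReal_mul hC₀.le]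
  -- pointwise domination of the sum
  have step1 : ∀ x : ℝ×ℝ, (‖∑' k : ℤ×ℤ, d k * g k x‖₊ : ℝ≥0∞) ≤ ∑' k : ℤ×ℤ, a k * h k x := by
    intro x
    by_cases hs : Summable fun k : ℤ×ℤ => d k * g k x
    · have hs' : Summable fun k : ℤ×ℤ => ‖d k * g k x‖ := summable_norm_iff.mpr hs
      calc (‖∑' k : ℤ×ℤ, d k * g k x‖₊ : ℝ≥0∞)
          = ENNReal.ofReal ‖∑' k : ℤ×ℤ, d k * g k x‖ := (ofReal_norm _).symm
        _ ≤ ENNReal.ofReal (∑' k : ℤ×ℤ, ‖d k * g k x‖) :=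
            ENNReal.ofReal_le_ofReal (norm_tsum_le_tsum_norm hs')
        _ = ∑' k : ℤ×ℤ, ENNReal.ofReal ‖d k * g k x‖ :=
            ENNReal.ofReal_tsum_of_nonneg (fun _ => norm_nonneg _) hs'
        _ ≤ ∑' k : ℤ×ℤ, a k * h k x := by
            refine ENNReal.tsum_le_tsum fun k => ?_
            rw [norm_mul, ENNReal.ofReal_mul (norm_nonneg _),
              ofReal_norm, ofReal_norm]
            exact mul_le_mul_right (hgb' k x) _
    · rw [tsum_eq_zero_of_not_summable hs]
      simp
  -- sum of the dominating functions
  have hsum_h : ∀ x : ℝ×ℝ, ∑' k : ℤ×ℤ, h k x ≤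
      ENNReal.ofReal C₀ * (16 * (2:ℝ≥0∞)^(m₁-ℓ₁)) * (16 * (2:ℝ≥0∞)^(m₂-ℓ₂)) := by
    intro x
    rw [ENNReal.tsum_prod']
    simp only [hhdef]
    calc ∑' k₁ : ℤ, ∑' k₂ : ℤ, ENNReal.ofReal C₀ * φ₁ k₁ x.1 * φ₂ k₂ x.2
        = ∑' k₁ : ℤ, (ENNReal.ofReal C₀ * φ₁ k₁ x.1) * ∑' k₂ : ℤ, φ₂ k₂ x.2 := by
          refine tsum_congr fun k₁ => ?_
          exact ENNReal.tsum_mul_left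
      _ = (ENNReal.ofReal C₀ * ∑' k₁ : ℤ, φ₁ k₁ x.1) * ∑' k₂ : ℤ, φ₂ k₂ x.2 := by
          rw [ENNReal.tsum_mul_right, ENNReal.tsum_mul_left]
      _ ≤ (ENNReal.ofReal C₀ * (16 * (2:ℝ≥0∞)^(m₁-ℓ₁))) * (16 * (2:ℝ≥0∞)^(m₂-ℓ₂)) := by
          gcongr
          · exact molecule_dim_sum ℓ₁ m₁ hℓ₁ x.1
          · exact molecule_dim_sum ℓ₂ m₂ hℓ₂ x.2
  -- integral of the dominating functions
  have hint : ∀ k : ℤ×ℤ, ∫⁻ x : ℝ×ℝ, h k x ≤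
      ENNReal.ofReal C₀ * (4 * (2:ℝ≥0∞)^(-ℓ₁)) * (4 * (2:ℝ≥0∞)^(-ℓ₂)) := by
    intro k
    have hfact : ∫⁻ x : ℝ×ℝ, h k x
        = (∫⁻ u : ℝ, ENNReal.ofReal C₀ * φ₁ k.1 u) * ∫⁻ u : ℝ, φ₂ k.2 u := by
      rw [MeasureTheory.Measure.volume_eq_prod]
      exact lintegral_prod_mul ((measurable_const.mul (hφ₁m k.1)).aemeasurable)
        ((hφ₂m k.2).aemeasurable)
    rw [hfact, lintegral_const_mul' _ _ ENNReal.ofReal_ne_top]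
    gcongr
    · exact molecule_dim_int ℓ₁ _
    · exact molecule_dim_int ℓ₂ _
  by_cases hptop : p = ∞
  · -- the case p = ∞
    subst hptop
    rw [eLpNorm_exponent_top, eLpNorm_exponent_top]
    have hdk : ∀ k : ℤ×ℤ, a k ≤ eLpNormEssSup d Measure.count := by
      intro k
      have hae := ENNReal.ae_le_essSup (μ := Measure.count)
        (f := fun j : ℤ×ℤ => (‖d j‖₊ : ℝ≥0∞))
      rw [MeasureTheory.ae_iff, Measure.count_eq_zero_iff] at hae
      by_contra hc
      have hmem : k ∈ {j : ℤ×ℤ | ¬ (‖d j‖₊ : ℝ≥0∞) ≤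
          essSup (fun j : ℤ×ℤ => (‖d j‖₊ : ℝ≥0∞)) Measure.count} := hc
      rw [hae] at hmem
      exact hmem
    have hbd : ∀ x : ℝ×ℝ, (‖∑' k : ℤ×ℤ, d k * g k x‖₊ : ℝ≥0∞) ≤
        eLpNormEssSup d Measure.count *
          (ENNReal.ofReal C₀ * (16 * (2:ℝ≥0∞)^(m₁-ℓ₁)) * (16 * (2:ℝ≥0∞)^(m₂-ℓ₂))) := by
      intro x
      calc (‖∑' k : ℤ×ℤ, d k * g k x‖₊ : ℝ≥0∞) ≤ ∑' k : ℤ×ℤ, a k * h k x := step1 x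
        _ ≤ ∑' k : ℤ×ℤ, eLpNormEssSup d Measure.count * h k x :=
            ENNReal.tsum_le_tsum fun k => mul_le_mul_left (hdk k) _
        _ = eLpNormEssSup d Measure.count * ∑' k : ℤ×ℤ, h k x := ENNReal.tsum_mul_left
        _ ≤ _ := mul_le_mul_right (hsum_h x) _
    calc eLpNormEssSup (fun x : ℝ×ℝ => ∑' k : ℤ×ℤ, d k * g k x) volume
        ≤ eLpNormEssSup d Measure.count *
            (ENNReal.ofReal C₀ * (16 * (2:ℝ≥0∞)^(m₁-ℓ₁)) * (16 * (2:ℝ≥0∞)^(m₂-ℓ₂))) :=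
          essSup_le_of_ae_le _ (Filter.Eventually.of_forall hbd)
      _ ≤ ENNReal.ofReal C₀ * 4096 * (2:ℝ≥0∞) ^ (-(((m₁:ℝ) + (m₂:ℝ))) / (∞ : ℝ≥0∞).toReal) *
            (2:ℝ≥0∞)^(m₁-ℓ₁) * (2:ℝ≥0∞)^(m₂-ℓ₂) * eLpNormEssSup d Measure.count := by
          rw [ENNReal.toReal_top, div_zero, ENNReal.rpow_zero]
          calc eLpNormEssSup d Measure.count *
              (ENNReal.ofReal C₀ * (16 * (2:ℝ≥0∞)^(m₁-ℓ₁)) * (16 * (2:ℝ≥0∞)^(m₂-ℓ₂)))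
              = ENNReal.ofReal C₀ * 256 * (2:ℝ≥0∞)^(m₁-ℓ₁) * (2:ℝ≥0∞)^(m₂-ℓ₂) *
                  eLpNormEssSup d Measure.count := by ring
            _ ≤ ENNReal.ofReal C₀ * 4096 * (2:ℝ≥0∞)^(m₁-ℓ₁) * (2:ℝ≥0∞)^(m₂-ℓ₂) *
                  eLpNormEssSup d Measure.count := by
                gcongr
                norm_num
            _ = ENNReal.ofReal C₀ * 4096 * 1 * (2:ℝ≥0∞)^(m₁-ℓ₁) * (2:ℝ≥0∞)^(m₂-ℓ₂) *
                  eLpNormEssSup d Measure.count := by ring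
  · -- the case p < ∞
    have hq1 : 1 ≤ p.toReal := by
      rw [← ENNReal.toReal_one]
      exact ENNReal.toReal_mono hptop hp
    have hq0 : 0 < p.toReal := lt_of_lt_of_le zero_lt_one hq1
    set q : ℝ := p.toReal with hqdef
    rw [eLpNorm_eq_lintegral_rpow_enorm_toReal hp0 hptop, eLpNorm_eq_lintegral_rpow_enorm_toReal hp0 hptop,
      lintegral_count]
    set W : ℝ≥0∞ := ENNReal.ofReal C₀ * (16 * (2:ℝ≥0∞)^(m₁-ℓ₁)) * (16 * (2:ℝ≥0∞)^(m₂-ℓ₂))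
      with hWdef
    set I : ℝ≥0∞ := ENNReal.ofReal C₀ * (4 * (2:ℝ≥0∞)^(-ℓ₁)) * (4 * (2:ℝ≥0∞)^(-ℓ₂)) with hIdef
    have hWne : W ≠ ⊤ := by
      rw [hWdef]
      refine ENNReal.mul_ne_top (ENNReal.mul_ne_top ENNReal.ofReal_ne_top ?_) ?_ <;>
        exact ENNReal.mul_ne_top (by norm_num)
          (ENNReal.zpow_lt_top (by norm_num) (by norm_num) _).ne
    have hW1ne : W^(q-1) ≠ ⊤ := ENNReal.rpow_ne_top_of_nonneg (by linarith) hWne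
    have pointwise : ∀ x : ℝ×ℝ, (‖∑' k : ℤ×ℤ, d k * g k x‖₊ : ℝ≥0∞)^q ≤
        W^(q-1) * ∑' k : ℤ×ℤ, (a k)^q * h k x := by
      intro x
      calc (‖∑' k : ℤ×ℤ, d k * g k x‖₊ : ℝ≥0∞)^q
          ≤ (∑' k : ℤ×ℤ, a k * h k x)^q := ENNReal.rpow_le_rpow (step1 x) hq0.le
        _ = (∑' k : ℤ×ℤ, h k x * a k)^q := by
            congr 1
            exact tsum_congr fun k => mul_comm _ _
        _ ≤ ((∑' k : ℤ×ℤ, h k x)^(1-q⁻¹) * (∑' k : ℤ×ℤ, h k x * (a k)^q)^(q⁻¹))^q :=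
            ENNReal.rpow_le_rpow (molecule_tsum_weighted_holder hq1 _ _) hq0.le
        _ = ((∑' k : ℤ×ℤ, h k x)^(1-q⁻¹))^q * ((∑' k : ℤ×ℤ, h k x * (a k)^q)^(q⁻¹))^q :=
            ENNReal.mul_rpow_of_nonneg _ _ hq0.le
        _ = (∑' k : ℤ×ℤ, h k x)^((1-q⁻¹)*q) * (∑' k : ℤ×ℤ, h k x * (a k)^q)^(q⁻¹*q) := by
            rw [← ENNReal.rpow_mul, ← ENNReal.rpow_mul]
        _ = (∑' k : ℤ×ℤ, h k x)^(q-1) * ∑' k : ℤ×ℤ, h k x * (a k)^q := by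
            rw [inv_mul_cancel₀ hq0.ne', ENNReal.rpow_one]
            congr 2
            field_simp
        _ ≤ W^(q-1) * ∑' k : ℤ×ℤ, h k x * (a k)^q :=
            mul_le_mul_left (ENNReal.rpow_le_rpow (hsum_h x) (by linarith)) _
        _ = W^(q-1) * ∑' k : ℤ×ℤ, (a k)^q * h k x := by
            congr 1
            exact tsum_congr fun k => mul_comm _ _
    calc (∫⁻ x : ℝ×ℝ, (‖∑' k : ℤ×ℤ, d k * g k x‖₊ : ℝ≥0∞)^q)^(1/q)
        ≤ (∫⁻ x : ℝ×ℝ, W^(q-1) * ∑' k : ℤ×ℤ, (a k)^q * h k x)^(1/q) :=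
          ENNReal.rpow_le_rpow (lintegral_mono pointwise) (by positivity)
      _ = (W^(q-1) * ∑' k : ℤ×ℤ, (a k)^q * ∫⁻ x : ℝ×ℝ, h k x)^(1/q) := by
          rw [lintegral_const_mul' _ _ hW1ne,
            lintegral_tsum fun k => ((hhm k).const_mul _).aemeasurable]
          congr 2
          refine tsum_congr fun k => ?_
          exact lintegral_const_mul' _ _
            (ENNReal.rpow_ne_top_of_nonneg hq0.le ENNReal.coe_ne_top)
      _ ≤ (W^(q-1) * ∑' k : ℤ×ℤ, (a k)^q * I)^(1/q) := by
          gcongr with k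
          exact hint k
      _ = (W^(q-1) * (I * ∑' k : ℤ×ℤ, (a k)^q))^(1/q) := by
          rw [ENNReal.tsum_mul_right]
          congr 1
          ring
      _ = (W^(q-1))^(1/q) * I^(1/q) * (∑' k : ℤ×ℤ, (a k)^q)^(1/q) := by
          rw [ENNReal.mul_rpow_of_nonneg (W^(q-1)) (I * ∑' k : ℤ×ℤ, (a k)^q) (by positivity),
            ENNReal.mul_rpow_of_nonneg I (∑' k : ℤ×ℤ, (a k)^q) (by positivity), mul_assoc]
      _ ≤ (ENNReal.ofReal C₀ * 4096 * (2:ℝ≥0∞) ^ (-(((m₁:ℝ) + (m₂:ℝ))) / q) *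
            (2:ℝ≥0∞)^(m₁-ℓ₁) * (2:ℝ≥0∞)^(m₂-ℓ₂)) * (∑' k : ℤ×ℤ, (a k)^q)^(1/q) := by
          exact mul_le_mul_left (molecule_final hE ENNReal.ofReal_ne_top hq1 ℓ₁ ℓ₂ m₁ m₂) _
      _ = ENNReal.ofReal C₀ * 4096 * (2:ℝ≥0∞) ^ (-(((m₁:ℝ) + (m₂:ℝ))) / q) *
            (2:ℝ≥0∞)^(m₁-ℓ₁) * (2:ℝ≥0∞)^(m₂-ℓ₂) * (∑' k : ℤ×ℤ, (a k)^q)^(1/q) := by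
          ring
end

section
/- Suppose f is a bounded function on ℝ² whose hyperbolic wavelet coefficients (in a Schwartz wavelet basis with rapidly decaying wavelets, L¹-normalized) satisfy the two-microlocal estimate |c_{j₁,j₂,k₁,k₂}| ≤ C·min(2^{−j₁s/α₁} + |k₁/2^{j₁} − a|^{s/α₁}, 2^{−j₂s/α₂} + |k₂/2^{j₂} − b|^{s/α₂}) at x₀ = (a,b), for an admissible anisotropy α = (α₁, α₂) and s > 0. For each j ∈ ℕ let f_j = ∑_{(j₁,j₂) ∈ Γ_j(α)} ∑_{(k₁,k₂) ∈ ℤ²} c_{j₁,j₂,k₁,k₂} ψ_{j₁,j₂,k₁,k₂}. Then there exists C' > 0 such that for all j and all x = (x₁,x₂), |f_j(x)| ≤ C'·( j·2^{−js} + j·|x₁ − a|^{s/α₁} + j·|x₂ − b|^{s/α₂} ). -/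
open scoped ENNReal

/-- The anisotropic index set `Γ_j(α) = Γ_j^{HL} ∪ Γ_j^{LH} ∪ Γ_j^{HH}`. -/
def GammaSet (α₁ α₂ : ℝ) (j : ℕ) : Set (ℕ × ℕ) :=
  {q | (⌊((j : ℝ) - 1) * α₁⌋ - 1 ≤ (q.1 : ℤ) ∧ (q.1 : ℤ) ≤ ⌊(j : ℝ) * α₁⌋ + 1 ∧
          (q.2 : ℤ) ≤ ⌊((j : ℝ) - 1) * α₂⌋ - 1) ∨
       ((q.1 : ℤ) ≤ ⌊((j : ℝ) - 1) * α₁⌋ - 1 ∧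
          ⌊((j : ℝ) - 1) * α₂⌋ - 1 ≤ (q.2 : ℤ) ∧ (q.2 : ℤ) ≤ ⌊(j : ℝ) * α₂⌋ + 1) ∨
       (⌊((j : ℝ) - 1) * α₁⌋ - 1 ≤ (q.1 : ℤ) ∧ (q.1 : ℤ) ≤ ⌊(j : ℝ) * α₁⌋ + 1 ∧
          ⌊((j : ℝ) - 1) * α₂⌋ - 1 ≤ (q.2 : ℤ) ∧ (q.2 : ℤ) ≤ ⌊(j : ℝ) * α₂⌋ + 1)}

/-- The block `f_j = ∑_{(j₁,j₂) ∈ Γ_j(α)} ∑_{(k₁,k₂)} c_{j₁,j₂,k₁,k₂} ψ_{j₁,j₂,k₁,k₂}`. -/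
noncomputable def blockSum (α₁ α₂ : ℝ) (ψ : ℝ → ℝ) (c : ℕ → ℕ → ℤ → ℤ → ℝ)
    (j : ℕ) (x : ℝ × ℝ) : ℝ :=
  ∑' q : ℕ × ℕ, ∑' k : ℤ × ℤ,
    Set.indicator (GammaSet α₁ α₂ j)
      (fun _ => c q.1 q.2 k.1 k.2 *
        ψ ((2 : ℝ) ^ q.1 * x.1 - k.1) * ψ ((2 : ℝ) ^ q.2 * x.2 - k.2)) q

set_option maxHeartbeats 1000000

noncomputable def hker (k : ℤ) : ℝ := 1 / (k:ℝ)^2 + if k = 0 then 1 else 0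

lemma hker_nonneg (k : ℤ) : 0 ≤ hker k := by
  unfold hker; positivity

lemma summable_hker : Summable hker := by
  apply Summable.add
  · exact Real.summable_one_div_int_pow.2 one_lt_two
  · apply summable_of_ne_finset_zero (s := {0})
    intro b hb
    simp [Finset.mem_singleton] at hb
    simp [hb]

lemma kernel_le_hker (u : ℝ) (k : ℤ) :
    ((1 + |u - k|)^2)⁻¹ ≤ hker (k - ⌊u⌋) := by
  set n : ℤ := k - ⌊u⌋ with hn
  have ht0 : 0 ≤ u - ⌊u⌋ := by
    have := Int.floor_le u; linarith
  have ht1 : u - ⌊u⌋ < 1 := by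
    have := Int.lt_floor_add_one u; linarith
  have hukey : u - k = (u - ⌊u⌋) - n := by push_cast [hn]; ring
  by_cases h0 : n = 0
  · have : ((1 + |u - k|)^2)⁻¹ ≤ 1 := by
      rw [inv_le_one_iff₀]
      right
      nlinarith [abs_nonneg (u - (k:ℝ))]
    simpa [hker, h0] using this
  · have habs : |(n:ℝ)| ≤ 1 + |u - k| := by
      have : |(n:ℝ)| ≤ |u - k| + |u - ⌊u⌋| := by
        rw [hukey]
        have := abs_sub_abs_le_abs_sub ((u - ⌊u⌋) - n) (u - (⌊u⌋:ℝ))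
        calc |(n:ℝ)| = |((u - ⌊u⌋) - n) - (u - ⌊u⌋)| := by rw [abs_sub_comm]; ring_nf
          _ ≤ |(u - ⌊u⌋) - n| + |u - ⌊u⌋| := abs_sub _ _
      have habs2 : |u - (⌊u⌋:ℝ)| ≤ 1 := by rw [abs_of_nonneg ht0]; linarith
      linarith
    have hsq : (n:ℝ)^2 ≤ (1 + |u - k|)^2 := by
      have := sq_abs (n:ℝ)
      nlinarith [abs_nonneg (u - (k:ℝ)), abs_nonneg ((n:ℝ))]
    have hn0 : (0:ℝ) < (n:ℝ)^2 := by
      have : (n:ℝ) ≠ 0 := Int.cast_ne_zero.2 h0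
      positivity
    have : ((1 + |u - k|)^2)⁻¹ ≤ ((n:ℝ)^2)⁻¹ := by
      apply inv_anti₀ hn0 hsq
    simpa [hker, h0, one_div] using this

lemma kernel_bound : ∃ S > (0:ℝ), ∀ u : ℝ,
    Summable (fun k : ℤ => ((1 + |u - k|)^2)⁻¹) ∧
    ∑' k : ℤ, ((1 + |u - k|)^2)⁻¹ ≤ S := by
  refine ⟨(∑' k, hker k) + 1, by have : 0 ≤ ∑' k, hker k := tsum_nonneg hker_nonneg; linarith, fun u => ?_⟩
  have hsh : Summable (fun k : ℤ => hker (k - ⌊u⌋)) := by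
    have := (Equiv.subRight (⌊u⌋)).summable_iff (f := hker)
    exact this.2 summable_hker
  have htsumsh : ∑' k : ℤ, hker (k - ⌊u⌋) = ∑' k, hker k :=
    (Equiv.subRight (⌊u⌋)).tsum_eq hker
  have hsum : Summable (fun k : ℤ => ((1 + |u - k|)^2)⁻¹) := by
    apply Summable.of_nonneg_of_le (fun k => by positivity) (kernel_le_hker u) hsh
  refine ⟨hsum, ?_⟩
  calc ∑' k : ℤ, ((1 + |u - k|)^2)⁻¹ ≤ ∑' k : ℤ, hker (k - ⌊u⌋) :=
        Summable.tsum_le_tsum (kernel_le_hker u) hsum hsh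
    _ = ∑' k, hker k := htsumsh
    _ ≤ (∑' k, hker k) + 1 := by linarith

lemma psi_sum (ψ : ℝ → ℝ)
    (hψ : ∀ N : ℕ, ∃ CN > (0 : ℝ), ∀ u : ℝ, |ψ u| ≤ CN * (1 + |u|) ^ (-(N : ℝ)))
    (θ : ℝ) (hθ : 0 ≤ θ) : ∃ S > (0:ℝ), ∀ u : ℝ,
    Summable (fun k : ℤ => |ψ (u - k)| * |u - k| ^ θ) ∧
    ∑' k : ℤ, |ψ (u - k)| * |u - k| ^ θ ≤ S := by
  obtain ⟨S₂, hS₂, hker⟩ := kernel_bound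
  set m : ℕ := ⌈θ⌉₊ with hm
  obtain ⟨CN, hCN, hdec⟩ := hψ (m + 2)
  have key : ∀ v : ℝ, |ψ v| * |v| ^ θ ≤ CN * ((1 + |v|)^2)⁻¹ := by
    intro v
    have h1 : (0:ℝ) < 1 + |v| := by positivity
    have h2 : |v| ^ θ ≤ (1 + |v|) ^ θ :=
      Real.rpow_le_rpow (abs_nonneg v) (by nlinarith [abs_nonneg v]) hθ
    have h3 : (1 + |v|) ^ θ ≤ (1 + |v|) ^ (m:ℝ) :=
      Real.rpow_le_rpow_of_exponent_le (by nlinarith [abs_nonneg v]) (Nat.le_ceil θ)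
    have h4 : (1 + |v|) ^ (m:ℝ) = (1 + |v|) ^ m := Real.rpow_natCast _ m
    have h5 : (1 + |v|) ^ (-((m + 2 : ℕ) : ℝ)) = ((1 + |v|) ^ (m+2))⁻¹ := by
      rw [Real.rpow_neg h1.le, Real.rpow_natCast]
    have h6 : |ψ v| ≤ CN * ((1 + |v|) ^ (m+2))⁻¹ := by
      have := hdec v; rwa [h5] at this
    calc |ψ v| * |v| ^ θ ≤ (CN * ((1 + |v|) ^ (m+2))⁻¹) * ((1 + |v|)^m) := by
          apply mul_le_mul h6 (by rw [← h4]; exact h2.trans h3) (by positivity)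
            (by positivity)
      _ = CN * ((1 + |v|)^2)⁻¹ := by
          rw [pow_add]
          field_simp
  refine ⟨CN * S₂, by positivity, fun u => ?_⟩
  have hsum : Summable (fun k : ℤ => |ψ (u - k)| * |u - k| ^ θ) := by
    exact Summable.of_nonneg_of_le (fun k : ℤ => by positivity)
      (fun k : ℤ => key (u - k)) ((hker u).1.mul_left CN)
  refine ⟨hsum, ?_⟩
  calc ∑' k : ℤ, |ψ (u - k)| * |u - k| ^ θ
      ≤ ∑' k : ℤ, CN * ((1 + |u - k|)^2)⁻¹ :=
        Summable.tsum_le_tsum (fun k => key (u - k)) hsum ((hker u).1.mul_left CN)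
    _ = CN * ∑' k : ℤ, ((1 + |u - k|)^2)⁻¹ := tsum_mul_left
    _ ≤ CN * S₂ := by
        have := (hker u).2
        exact mul_le_mul_of_nonneg_left this hCN.le

lemma rpow_add_le' (p q θ : ℝ) (hp : 0 ≤ p) (hq : 0 ≤ q) (hθ : 0 ≤ θ) :
    (p + q) ^ θ ≤ 2 ^ θ * (p ^ θ + q ^ θ) := by
  have h2 : (0:ℝ) ≤ 2 ^ θ := Real.rpow_nonneg (by norm_num) θ
  rcases le_total p q with h | h
  · calc (p + q) ^ θ ≤ (2 * q) ^ θ :=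
        Real.rpow_le_rpow (by linarith) (by linarith) hθ
      _ = 2 ^ θ * q ^ θ := Real.mul_rpow (by norm_num) hq
      _ ≤ 2 ^ θ * (p ^ θ + q ^ θ) := by
        have := Real.rpow_nonneg hp θ
        nlinarith
  · calc (p + q) ^ θ ≤ (2 * p) ^ θ :=
        Real.rpow_le_rpow (by linarith) (by linarith) hθ
      _ = 2 ^ θ * p ^ θ := Real.mul_rpow (by norm_num) hp
      _ ≤ 2 ^ θ * (p ^ θ + q ^ θ) := by
        have := Real.rpow_nonneg hq θ
        nlinarith

/-- 1-D coordinate estimate. -/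
lemma coord_bound (ψ : ℝ → ℝ)
    (hψ : ∀ N : ℕ, ∃ CN > (0 : ℝ), ∀ u : ℝ, |ψ u| ≤ CN * (1 + |u|) ^ (-(N : ℝ)))
    (θ a : ℝ) (hθ : 0 < θ) : ∃ B > (0:ℝ), ∀ (j₁ : ℕ) (x : ℝ),
    Summable (fun k : ℤ =>
      ((2:ℝ) ^ (-(j₁:ℝ) * θ) + |(k:ℝ) / 2 ^ j₁ - a| ^ θ) * |ψ ((2:ℝ) ^ j₁ * x - k)|) ∧
    ∑' k : ℤ, ((2:ℝ) ^ (-(j₁:ℝ) * θ) + |(k:ℝ) / 2 ^ j₁ - a| ^ θ) * |ψ ((2:ℝ) ^ j₁ * x - k)|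
      ≤ B * ((2:ℝ) ^ (-(j₁:ℝ) * θ) + |x - a| ^ θ) := by
  obtain ⟨S₀, hS₀, h0⟩ := psi_sum ψ hψ 0 le_rfl
  obtain ⟨Sθ, hSθ, hθs⟩ := psi_sum ψ hψ θ hθ.le
  refine ⟨S₀ + 2 ^ θ * S₀ + 2 ^ θ * Sθ, by positivity, fun j₁ x => ?_⟩
  set u : ℝ := (2:ℝ) ^ j₁ * x with hu
  set P : ℝ := (2:ℝ) ^ (-(j₁:ℝ) * θ) with hP
  have hPpos : 0 < P := Real.rpow_pos_of_pos (by norm_num) _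
  have h2θ : (0:ℝ) < 2 ^ θ := Real.rpow_pos_of_pos (by norm_num) θ
  -- key termwise bound
  have key : ∀ k : ℤ,
      (P + |(k:ℝ) / 2 ^ j₁ - a| ^ θ) * |ψ (u - k)| ≤
      (P + 2 ^ θ * |x - a| ^ θ) * (|ψ (u - k)| * |u - k| ^ (0:ℝ))
        + (2 ^ θ * P) * (|ψ (u - k)| * |u - k| ^ θ) := by
    intro k
    have hψnn : (0:ℝ) ≤ |ψ (u - k)| := abs_nonneg _
    have hpow : (0:ℝ) < (2:ℝ) ^ j₁ := by positivity
    have hsplit : |(k:ℝ) / 2 ^ j₁ - a| ≤ |x - a| + |u - k| / 2 ^ j₁ := by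
      have : (k:ℝ) / 2 ^ j₁ - a = (x - a) - (u - k) / 2 ^ j₁ := by
        field_simp [hu]; ring
      rw [this]
      calc |(x - a) - (u - k) / 2 ^ j₁| ≤ |x - a| + |(u - k) / 2 ^ j₁| := abs_sub _ _
        _ = |x - a| + |u - k| / 2 ^ j₁ := by rw [abs_div, abs_of_pos hpow]
    have hrp : |(k:ℝ) / 2 ^ j₁ - a| ^ θ ≤ 2 ^ θ * (|x - a| ^ θ + P * |u - k| ^ θ) := by
      have h1 : |(k:ℝ) / 2 ^ j₁ - a| ^ θ ≤ (|x - a| + |u - k| / 2 ^ j₁) ^ θ :=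
        Real.rpow_le_rpow (abs_nonneg _) hsplit hθ.le
      have h2 : (|x - a| + |u - k| / 2 ^ j₁) ^ θ ≤
          2 ^ θ * (|x - a| ^ θ + (|u - k| / 2 ^ j₁) ^ θ) :=
        rpow_add_le' _ _ θ (abs_nonneg _) (by positivity) hθ.le
      have h3 : (|u - k| / 2 ^ j₁) ^ θ = P * |u - k| ^ θ := by
        rw [Real.div_rpow (abs_nonneg _) hpow.le, hP, div_eq_inv_mul]
        congr 1
        rw [← Real.rpow_natCast (2:ℝ) j₁, ← Real.rpow_mul (by norm_num : (0:ℝ) ≤ 2),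
          ← Real.rpow_neg (by norm_num : (0:ℝ) ≤ 2)]
        ring_nf
      calc |(k:ℝ) / 2 ^ j₁ - a| ^ θ ≤ (|x - a| + |u - k| / 2 ^ j₁) ^ θ := h1
        _ ≤ 2 ^ θ * (|x - a| ^ θ + (|u - k| / 2 ^ j₁) ^ θ) := h2
        _ = 2 ^ θ * (|x - a| ^ θ + P * |u - k| ^ θ) := by rw [h3]
    calc (P + |(k:ℝ) / 2 ^ j₁ - a| ^ θ) * |ψ (u - k)|
        ≤ (P + 2 ^ θ * (|x - a| ^ θ + P * |u - k| ^ θ)) * |ψ (u - k)| := by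
          apply mul_le_mul_of_nonneg_right _ hψnn
          linarith
      _ = (P + 2 ^ θ * |x - a| ^ θ) * (|ψ (u - k)| * |u - k| ^ (0:ℝ))
            + (2 ^ θ * P) * (|ψ (u - k)| * |u - k| ^ θ) := by
          rw [Real.rpow_zero]; ring
  -- summability and summation
  set A : ℝ := P + 2 ^ θ * |x - a| ^ θ with hA
  set Bc : ℝ := 2 ^ θ * P with hBc
  have hXnn : (0:ℝ) ≤ |x - a| ^ θ := Real.rpow_nonneg (abs_nonneg _) θ
  have hAnn : 0 < A := by positivity
  have hBnn : 0 < Bc := by positivity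
  have hsumMaj : Summable (fun k : ℤ =>
      A * (|ψ (u - k)| * |u - k| ^ (0:ℝ)) + Bc * (|ψ (u - k)| * |u - k| ^ θ)) :=
    ((h0 u).1.mul_left A).add ((hθs u).1.mul_left Bc)
  have hsum : Summable (fun k : ℤ =>
      (P + |(k:ℝ) / 2 ^ j₁ - a| ^ θ) * |ψ ((2:ℝ) ^ j₁ * x - k)|) := by
    exact Summable.of_nonneg_of_le (fun k : ℤ => by positivity) key hsumMaj
  refine ⟨hsum, ?_⟩
  calc ∑' k : ℤ, (P + |(k:ℝ) / 2 ^ j₁ - a| ^ θ) * |ψ ((2:ℝ) ^ j₁ * x - k)|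
      ≤ ∑' k : ℤ, (A * (|ψ (u - k)| * |u - k| ^ (0:ℝ))
          + Bc * (|ψ (u - k)| * |u - k| ^ θ)) := Summable.tsum_le_tsum key hsum hsumMaj
    _ = A * (∑' k : ℤ, |ψ (u - k)| * |u - k| ^ (0:ℝ))
          + Bc * (∑' k : ℤ, |ψ (u - k)| * |u - k| ^ θ) := by
        rw [Summable.tsum_add ((h0 u).1.mul_left A) ((hθs u).1.mul_left Bc),
          tsum_mul_left, tsum_mul_left]
    _ ≤ A * S₀ + Bc * Sθ := by
        have h1 := (h0 u).2
        have h2 := (hθs u).2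
        exact add_le_add (mul_le_mul_of_nonneg_left h1 hAnn.le)
          (mul_le_mul_of_nonneg_left h2 hBnn.le)
    _ ≤ (S₀ + 2 ^ θ * S₀ + 2 ^ θ * Sθ) * (P + |x - a| ^ θ) := by
        rw [hA, hBc]
        nlinarith [mul_nonneg hXnn hS₀.le, mul_pos h2θ (mul_pos hS₀ hPpos),
          mul_nonneg (mul_nonneg h2θ.le hSθ.le) hXnn]

lemma term_bound (α₁ α₂ s a b : ℝ) (hα₁ : 0 < α₁) (hα₂ : 0 < α₂) (hs : 0 < s)
    (ψ : ℝ → ℝ)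
    (hψ : ∀ N : ℕ, ∃ CN > (0 : ℝ), ∀ u : ℝ, |ψ u| ≤ CN * (1 + |u|) ^ (-(N : ℝ)))
    (c : ℕ → ℕ → ℤ → ℤ → ℝ) (C : ℝ) (hC : 0 < C)
    (hcoef : ∀ (j₁ j₂ : ℕ) (k₁ k₂ : ℤ),
      |c j₁ j₂ k₁ k₂| ≤
        C * min ((2 : ℝ) ^ (-(j₁ : ℝ) * (s / α₁)) + |(k₁ : ℝ) / 2 ^ j₁ - a| ^ (s / α₁))
                ((2 : ℝ) ^ (-(j₂ : ℝ) * (s / α₂)) + |(k₂ : ℝ) / 2 ^ j₂ - b| ^ (s / α₂))) :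
    ∃ B > (0:ℝ), ∀ j : ℕ, 1 ≤ j → ∀ j₁ j₂ : ℕ,
      (⌊((j : ℝ) - 1) * α₁⌋ - 1 ≤ (j₁ : ℤ) ∨ ⌊((j : ℝ) - 1) * α₂⌋ - 1 ≤ (j₂ : ℤ)) →
      ∀ x : ℝ × ℝ,
      Summable (fun k : ℤ × ℤ =>
        |c j₁ j₂ k.1 k.2 * ψ ((2:ℝ) ^ j₁ * x.1 - k.1) * ψ ((2:ℝ) ^ j₂ * x.2 - k.2)|) ∧
      ∑' k : ℤ × ℤ,
        |c j₁ j₂ k.1 k.2 * ψ ((2:ℝ) ^ j₁ * x.1 - k.1) * ψ ((2:ℝ) ^ j₂ * x.2 - k.2)|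
        ≤ B * ((2:ℝ) ^ (-(j:ℝ) * s) + |x.1 - a| ^ (s / α₁) + |x.2 - b| ^ (s / α₂)) := by
  set θ₁ : ℝ := s / α₁ with hθ₁
  set θ₂ : ℝ := s / α₂ with hθ₂
  have hθ₁p : 0 < θ₁ := div_pos hs hα₁
  have hθ₂p : 0 < θ₂ := div_pos hs hα₂
  obtain ⟨S₀, hS₀, h0⟩ := psi_sum ψ hψ 0 le_rfl
  obtain ⟨B₁, hB₁, hcb₁⟩ := coord_bound ψ hψ θ₁ a hθ₁p
  obtain ⟨B₂, hB₂, hcb₂⟩ := coord_bound ψ hψ θ₂ b hθ₂p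
  set E₁ : ℝ := (2:ℝ) ^ (s + 2 * θ₁) with hE₁
  set E₂ : ℝ := (2:ℝ) ^ (s + 2 * θ₂) with hE₂
  have hE₁p : 0 < E₁ := Real.rpow_pos_of_pos (by norm_num) _
  have hE₂p : 0 < E₂ := Real.rpow_pos_of_pos (by norm_num) _
  refine ⟨C * S₀ * (B₁ + B₂) * (E₁ + E₂ + 1), by positivity, fun j hj j₁ j₂ hbr x => ?_⟩
  set Q : ℝ := (2:ℝ) ^ (-(j:ℝ) * s) with hQ
  have hQp : 0 < Q := Real.rpow_pos_of_pos (by norm_num) _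
  set X₁ : ℝ := |x.1 - a| ^ θ₁ with hX₁
  set X₂ : ℝ := |x.2 - b| ^ θ₂ with hX₂
  have hX₁n : 0 ≤ X₁ := Real.rpow_nonneg (abs_nonneg _) _
  have hX₂n : 0 ≤ X₂ := Real.rpow_nonneg (abs_nonneg _) _
  rcases hbr with hbr | hbr
  · -- first-coordinate branch
    set P₁ : ℝ := (2:ℝ) ^ (-(j₁:ℝ) * θ₁) with hP₁
    have hP₁p : 0 < P₁ := Real.rpow_pos_of_pos (by norm_num) _
    -- P₁ ≤ E₁ * Q
    have hPQ : P₁ ≤ E₁ * Q := by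
      have hj₁ : ((j:ℝ) - 1) * α₁ - 2 ≤ (j₁ : ℝ) := by
        have h1 : (⌊((j : ℝ) - 1) * α₁⌋ : ℝ) - 1 ≤ (j₁ : ℝ) := by
          exact_mod_cast (by exact_mod_cast hbr : ((⌊((j : ℝ) - 1) * α₁⌋ - 1 : ℤ) : ℝ) ≤ (j₁ : ℝ))
        have h2 : ((j : ℝ) - 1) * α₁ - 1 ≤ (⌊((j : ℝ) - 1) * α₁⌋ : ℝ) := by
          have := Int.sub_one_lt_floor (((j : ℝ) - 1) * α₁)
          linarith
        linarith
      have hexp : -(j₁:ℝ) * θ₁ ≤ (s + 2 * θ₁) + (-(j:ℝ) * s) := by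
        have hαθ : α₁ * θ₁ = s := by rw [hθ₁]; field_simp
        have := mul_le_mul_of_nonneg_right hj₁ hθ₁p.le
        nlinarith
      calc P₁ ≤ (2:ℝ) ^ ((s + 2 * θ₁) + (-(j:ℝ) * s)) :=
            Real.rpow_le_rpow_of_exponent_le one_le_two hexp
        _ = E₁ * Q := Real.rpow_add (by norm_num) _ _
    set F : ℤ → ℝ := fun k₁ =>
      C * ((P₁ + |(k₁:ℝ) / 2 ^ j₁ - a| ^ θ₁) * |ψ ((2:ℝ) ^ j₁ * x.1 - k₁)|) with hF
    set G : ℤ → ℝ := fun k₂ =>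
      |ψ ((2:ℝ) ^ j₂ * x.2 - k₂)| * |(2:ℝ) ^ j₂ * x.2 - k₂| ^ (0:ℝ) with hG0
    have hFsum : Summable F := ((hcb₁ j₁ x.1).1).mul_left C
    have hGsum : Summable G := (h0 ((2:ℝ) ^ j₂ * x.2)).1
    have hFn : ∀ k, 0 ≤ F k := fun k => by
      have := Real.rpow_nonneg (abs_nonneg ((k:ℝ) / 2 ^ j₁ - a)) θ₁
      have := abs_nonneg (ψ ((2:ℝ) ^ j₁ * x.1 - k))
      simp only [hF]; positivity
    have hGn : ∀ k, 0 ≤ G k := fun k => by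
      simp only [hG0]; positivity
    have hprod : Summable (fun k : ℤ × ℤ => F k.1 * G k.2) :=
      Summable.mul_of_nonneg hFsum hGsum hFn hGn
    have hterm : ∀ k : ℤ × ℤ,
        |c j₁ j₂ k.1 k.2 * ψ ((2:ℝ) ^ j₁ * x.1 - k.1) * ψ ((2:ℝ) ^ j₂ * x.2 - k.2)|
          ≤ F k.1 * G k.2 := by
      intro k
      rw [abs_mul, abs_mul]
      have h1 : |c j₁ j₂ k.1 k.2| ≤ C * (P₁ + |(k.1:ℝ) / 2 ^ j₁ - a| ^ θ₁) :=
        (hcoef j₁ j₂ k.1 k.2).trans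
          (mul_le_mul_of_nonneg_left (min_le_left _ _) hC.le)
      calc |c j₁ j₂ k.1 k.2| * |ψ ((2:ℝ) ^ j₁ * x.1 - k.1)| * |ψ ((2:ℝ) ^ j₂ * x.2 - k.2)|
          ≤ (C * (P₁ + |(k.1:ℝ) / 2 ^ j₁ - a| ^ θ₁)) * |ψ ((2:ℝ) ^ j₁ * x.1 - k.1)|
              * |ψ ((2:ℝ) ^ j₂ * x.2 - k.2)| := by
            apply mul_le_mul_of_nonneg_right
              (mul_le_mul_of_nonneg_right h1 (abs_nonneg _)) (abs_nonneg _)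
        _ = F k.1 * G k.2 := by
            simp only [hF, hG0, Real.rpow_zero, mul_one]; ring
    have hsum : Summable (fun k : ℤ × ℤ =>
        |c j₁ j₂ k.1 k.2 * ψ ((2:ℝ) ^ j₁ * x.1 - k.1) * ψ ((2:ℝ) ^ j₂ * x.2 - k.2)|) :=
      Summable.of_nonneg_of_le (fun k => abs_nonneg _) hterm hprod
    refine ⟨hsum, ?_⟩
    have htprod : ∑' k : ℤ × ℤ, F k.1 * G k.2 = (∑' k, F k) * (∑' k, G k) := by
      rw [Summable.tsum_prod' hprod (fun k₁ => hGsum.mul_left (F k₁))]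
      calc ∑' (k₁ : ℤ) (k₂ : ℤ), F k₁ * G k₂ = ∑' k₁ : ℤ, F k₁ * ∑' k, G k := by
            congr 1; funext k₁; exact tsum_mul_left
        _ = (∑' k, F k) * (∑' k, G k) := tsum_mul_right
    have hGle : ∑' k, G k ≤ S₀ := (h0 ((2:ℝ) ^ j₂ * x.2)).2
    have hFle : ∑' k, F k ≤ C * (B₁ * (P₁ + X₁)) := by
      rw [hF, tsum_mul_left]
      exact mul_le_mul_of_nonneg_left (hcb₁ j₁ x.1).2 hC.le
    have hGtn : 0 ≤ ∑' k, G k := tsum_nonneg hGn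
    set RC : ℝ := C * S₀ * (B₁ + B₂) * (E₁ + E₂ + 1) with hRC
    have base : C * S₀ * B₁ ≤ C * S₀ * (B₁ + B₂) := by nlinarith [mul_pos hC hS₀]
    have k2 : C * S₀ * B₁ ≤ RC :=
      base.trans (le_mul_of_one_le_right (by positivity) (by linarith))
    have k1 : C * S₀ * B₁ * E₁ ≤ RC := by
      have := mul_le_mul base (by linarith : E₁ ≤ E₁ + E₂ + 1) hE₁p.le (by positivity)
      linarith [this]
    calc ∑' k : ℤ × ℤ,
        |c j₁ j₂ k.1 k.2 * ψ ((2:ℝ) ^ j₁ * x.1 - k.1) * ψ ((2:ℝ) ^ j₂ * x.2 - k.2)|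
        ≤ ∑' k : ℤ × ℤ, F k.1 * G k.2 := Summable.tsum_le_tsum hterm hsum hprod
      _ = (∑' k, F k) * (∑' k, G k) := htprod
      _ ≤ (C * (B₁ * (P₁ + X₁))) * S₀ := by
          apply mul_le_mul hFle hGle hGtn (by positivity)
      _ = (C * S₀ * B₁) * P₁ + (C * S₀ * B₁) * X₁ := by ring
      _ ≤ (C * S₀ * B₁ * E₁) * Q + (C * S₀ * B₁) * X₁ := by
          have := mul_le_mul_of_nonneg_left hPQ (by positivity : (0:ℝ) ≤ C * S₀ * B₁)
          nlinarith [this]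
      _ ≤ RC * Q + RC * X₁ := add_le_add (mul_le_mul_of_nonneg_right k1 hQp.le)
          (mul_le_mul_of_nonneg_right k2 hX₁n)
      _ ≤ RC * (Q + X₁ + X₂) := by
          have : 0 ≤ RC * X₂ := mul_nonneg (by positivity) hX₂n
          nlinarith [this]
  · -- second-coordinate branch
    set P₂ : ℝ := (2:ℝ) ^ (-(j₂:ℝ) * θ₂) with hP₂
    have hP₂p : 0 < P₂ := Real.rpow_pos_of_pos (by norm_num) _
    have hPQ : P₂ ≤ E₂ * Q := by
      have hj₂ : ((j:ℝ) - 1) * α₂ - 2 ≤ (j₂ : ℝ) := by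
        have h1 : (⌊((j : ℝ) - 1) * α₂⌋ : ℝ) - 1 ≤ (j₂ : ℝ) := by
          exact_mod_cast (by exact_mod_cast hbr : ((⌊((j : ℝ) - 1) * α₂⌋ - 1 : ℤ) : ℝ) ≤ (j₂ : ℝ))
        have h2 : ((j : ℝ) - 1) * α₂ - 1 ≤ (⌊((j : ℝ) - 1) * α₂⌋ : ℝ) := by
          have := Int.sub_one_lt_floor (((j : ℝ) - 1) * α₂)
          linarith
        linarith
      have hexp : -(j₂:ℝ) * θ₂ ≤ (s + 2 * θ₂) + (-(j:ℝ) * s) := by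
        have hαθ : α₂ * θ₂ = s := by rw [hθ₂]; field_simp
        have := mul_le_mul_of_nonneg_right hj₂ hθ₂p.le
        nlinarith
      calc P₂ ≤ (2:ℝ) ^ ((s + 2 * θ₂) + (-(j:ℝ) * s)) :=
            Real.rpow_le_rpow_of_exponent_le one_le_two hexp
        _ = E₂ * Q := Real.rpow_add (by norm_num) _ _
    set F : ℤ → ℝ := fun k₂ =>
      C * ((P₂ + |(k₂:ℝ) / 2 ^ j₂ - b| ^ θ₂) * |ψ ((2:ℝ) ^ j₂ * x.2 - k₂)|) with hF
    set G : ℤ → ℝ := fun k₁ =>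
      |ψ ((2:ℝ) ^ j₁ * x.1 - k₁)| * |(2:ℝ) ^ j₁ * x.1 - k₁| ^ (0:ℝ) with hG0
    have hFsum : Summable F := ((hcb₂ j₂ x.2).1).mul_left C
    have hGsum : Summable G := (h0 ((2:ℝ) ^ j₁ * x.1)).1
    have hFn : ∀ k, 0 ≤ F k := fun k => by
      have := Real.rpow_nonneg (abs_nonneg ((k:ℝ) / 2 ^ j₂ - b)) θ₂
      have := abs_nonneg (ψ ((2:ℝ) ^ j₂ * x.2 - k))
      simp only [hF]; positivity
    have hGn : ∀ k, 0 ≤ G k := fun k => by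
      simp only [hG0]; positivity
    have hprod : Summable (fun k : ℤ × ℤ => G k.1 * F k.2) :=
      Summable.mul_of_nonneg hGsum hFsum hGn hFn
    have hterm : ∀ k : ℤ × ℤ,
        |c j₁ j₂ k.1 k.2 * ψ ((2:ℝ) ^ j₁ * x.1 - k.1) * ψ ((2:ℝ) ^ j₂ * x.2 - k.2)|
          ≤ G k.1 * F k.2 := by
      intro k
      rw [abs_mul, abs_mul]
      have h1 : |c j₁ j₂ k.1 k.2| ≤ C * (P₂ + |(k.2:ℝ) / 2 ^ j₂ - b| ^ θ₂) :=
        (hcoef j₁ j₂ k.1 k.2).trans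
          (mul_le_mul_of_nonneg_left (min_le_right _ _) hC.le)
      calc |c j₁ j₂ k.1 k.2| * |ψ ((2:ℝ) ^ j₁ * x.1 - k.1)| * |ψ ((2:ℝ) ^ j₂ * x.2 - k.2)|
          ≤ (C * (P₂ + |(k.2:ℝ) / 2 ^ j₂ - b| ^ θ₂)) * |ψ ((2:ℝ) ^ j₁ * x.1 - k.1)|
              * |ψ ((2:ℝ) ^ j₂ * x.2 - k.2)| := by
            apply mul_le_mul_of_nonneg_right
              (mul_le_mul_of_nonneg_right h1 (abs_nonneg _)) (abs_nonneg _)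
        _ = G k.1 * F k.2 := by
            simp only [hF, hG0, Real.rpow_zero, mul_one]; ring
    have hsum : Summable (fun k : ℤ × ℤ =>
        |c j₁ j₂ k.1 k.2 * ψ ((2:ℝ) ^ j₁ * x.1 - k.1) * ψ ((2:ℝ) ^ j₂ * x.2 - k.2)|) :=
      Summable.of_nonneg_of_le (fun k => abs_nonneg _) hterm hprod
    refine ⟨hsum, ?_⟩
    have htprod : ∑' k : ℤ × ℤ, G k.1 * F k.2 = (∑' k, G k) * (∑' k, F k) := by
      rw [Summable.tsum_prod' hprod (fun k₁ => hFsum.mul_left (G k₁))]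
      calc ∑' (k₁ : ℤ) (k₂ : ℤ), G k₁ * F k₂ = ∑' k₁ : ℤ, G k₁ * ∑' k, F k := by
            congr 1; funext k₁; exact tsum_mul_left
        _ = (∑' k, G k) * (∑' k, F k) := tsum_mul_right
    have hGle : ∑' k, G k ≤ S₀ := (h0 ((2:ℝ) ^ j₁ * x.1)).2
    have hFle : ∑' k, F k ≤ C * (B₂ * (P₂ + X₂)) := by
      rw [hF, tsum_mul_left]
      exact mul_le_mul_of_nonneg_left (hcb₂ j₂ x.2).2 hC.le
    have hFtn : 0 ≤ ∑' k, F k := tsum_nonneg hFn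
    set RC : ℝ := C * S₀ * (B₁ + B₂) * (E₁ + E₂ + 1) with hRC
    have base : C * S₀ * B₂ ≤ C * S₀ * (B₁ + B₂) := by nlinarith [mul_pos hC hS₀]
    have k2 : C * S₀ * B₂ ≤ RC :=
      base.trans (le_mul_of_one_le_right (by positivity) (by linarith))
    have k1 : C * S₀ * B₂ * E₂ ≤ RC := by
      have := mul_le_mul base (by linarith : E₂ ≤ E₁ + E₂ + 1) hE₂p.le (by positivity)
      linarith [this]
    calc ∑' k : ℤ × ℤ,
        |c j₁ j₂ k.1 k.2 * ψ ((2:ℝ) ^ j₁ * x.1 - k.1) * ψ ((2:ℝ) ^ j₂ * x.2 - k.2)|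
        ≤ ∑' k : ℤ × ℤ, G k.1 * F k.2 := Summable.tsum_le_tsum hterm hsum hprod
      _ = (∑' k, G k) * (∑' k, F k) := htprod
      _ ≤ S₀ * (C * (B₂ * (P₂ + X₂))) := by
          apply mul_le_mul hGle hFle hFtn hS₀.le
      _ = (C * S₀ * B₂) * P₂ + (C * S₀ * B₂) * X₂ := by ring
      _ ≤ (C * S₀ * B₂ * E₂) * Q + (C * S₀ * B₂) * X₂ := by
          have := mul_le_mul_of_nonneg_left hPQ (by positivity : (0:ℝ) ≤ C * S₀ * B₂)
          nlinarith [this]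
      _ ≤ RC * Q + RC * X₂ := add_le_add (mul_le_mul_of_nonneg_right k1 hQp.le)
          (mul_le_mul_of_nonneg_right k2 hX₂n)
      _ ≤ RC * (Q + X₁ + X₂) := by
          have : 0 ≤ RC * X₁ := mul_nonneg (by positivity) hX₁n
          nlinarith [this]

/-- covering finset for `GammaSet`. -/
noncomputable def gammaFin (α₁ α₂ : ℝ) (j : ℕ) : Finset (ℕ × ℕ) :=
  (Finset.Icc (⌊((j : ℝ) - 1) * α₁⌋ - 1).toNat (⌊(j : ℝ) * α₁⌋ + 1).toNat
      ×ˢ Finset.range (2 * j + 2)) ∪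
  (Finset.range (2 * j + 2)
      ×ˢ Finset.Icc (⌊((j : ℝ) - 1) * α₂⌋ - 1).toNat (⌊(j : ℝ) * α₂⌋ + 1).toNat)

lemma floor_facts (α : ℝ) (hα : 0 < α) (hα2 : α ≤ 2) (j : ℕ) (hj : 1 ≤ j) :
    0 ≤ ⌊(j:ℝ) * α⌋ ∧ ⌊(j:ℝ) * α⌋ ≤ ⌊((j:ℝ) - 1) * α⌋ + 3 ∧
    ⌊((j:ℝ) - 1) * α⌋ ≤ ⌊(j:ℝ) * α⌋ ∧ ⌊(j:ℝ) * α⌋ ≤ 2 * (j:ℤ) := by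
  have hjr : (1:ℝ) ≤ (j:ℝ) := by exact_mod_cast hj
  refine ⟨Int.floor_nonneg.2 (by positivity), ?_, Int.floor_le_floor (by nlinarith), ?_⟩
  · have h1 : ((⌊(j:ℝ) * α⌋ : ℤ) : ℝ) ≤ (j:ℝ) * α := Int.floor_le _
    have h2 : ((j:ℝ) - 1) * α - 1 < ((⌊((j:ℝ) - 1) * α⌋ : ℤ) : ℝ) := Int.sub_one_lt_floor _
    have h4 : ((⌊(j:ℝ) * α⌋ : ℤ) : ℝ) < ((⌊((j:ℝ) - 1) * α⌋ + 4 : ℤ) : ℝ) := by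
      push_cast; nlinarith
    have : (⌊(j:ℝ) * α⌋ : ℤ) < ⌊((j:ℝ) - 1) * α⌋ + 4 := by exact_mod_cast h4
    omega
  · have : (j:ℝ) * α ≤ ((2 * (j:ℤ) : ℤ) : ℝ) := by push_cast; nlinarith
    have := Int.floor_le_floor this
    rwa [Int.floor_intCast] at this

lemma gamma_subset (α₁ α₂ : ℝ) (hα₁ : 0 < α₁) (hα₂ : 0 < α₂) (hsum : α₁ + α₂ = 2)
    (j : ℕ) (hj : 1 ≤ j) :
    ∀ q : ℕ × ℕ, q ∈ GammaSet α₁ α₂ j → q ∈ gammaFin α₁ α₂ j := by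
  obtain ⟨hn₁, hg₁, hm₁, hb₁⟩ := floor_facts α₁ hα₁ (by linarith) j hj
  obtain ⟨hn₂, hg₂, hm₂, hb₂⟩ := floor_facts α₂ hα₂ (by linarith) j hj
  have tm₁ : ⌊((j:ℝ) - 1) * α₁⌋ - 1 ≤ ((⌊((j:ℝ) - 1) * α₁⌋ - 1).toNat : ℤ) :=
    Int.self_le_toNat _
  have tm₂ : ⌊((j:ℝ) - 1) * α₂⌋ - 1 ≤ ((⌊((j:ℝ) - 1) * α₂⌋ - 1).toNat : ℤ) :=
    Int.self_le_toNat _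
  have tn₁ : (((⌊(j:ℝ) * α₁⌋ + 1).toNat) : ℤ) = ⌊(j:ℝ) * α₁⌋ + 1 :=
    Int.toNat_of_nonneg (by omega)
  have tn₂ : (((⌊(j:ℝ) * α₂⌋ + 1).toNat) : ℤ) = ⌊(j:ℝ) * α₂⌋ + 1 :=
    Int.toNat_of_nonneg (by omega)
  have tl₁ : ((⌊((j:ℝ) - 1) * α₁⌋ - 1).toNat : ℤ) ≤ max (⌊((j:ℝ) - 1) * α₁⌋ - 1) 0 := by
    rw [Int.toNat_eq_max]
  have tl₂ : ((⌊((j:ℝ) - 1) * α₂⌋ - 1).toNat : ℤ) ≤ max (⌊((j:ℝ) - 1) * α₂⌋ - 1) 0 := by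
    rw [Int.toNat_eq_max]
  intro q hq
  simp only [gammaFin, Finset.mem_union, Finset.mem_product, Finset.mem_Icc,
    Finset.mem_range]
  rcases hq with ⟨h1, h2, h3⟩ | ⟨h1, h2, h3⟩ | ⟨h1, h2, h3, h4⟩
  · left; omega
  · right; omega
  · left; omega

lemma gamma_card (α₁ α₂ : ℝ) (hα₁ : 0 < α₁) (hα₂ : 0 < α₂) (hsum : α₁ + α₂ = 2)
    (j : ℕ) (hj : 1 ≤ j) : (gammaFin α₁ α₂ j).card ≤ 48 * j := by
  obtain ⟨hn₁, hg₁, hm₁, hb₁⟩ := floor_facts α₁ hα₁ (by linarith) j hj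
  obtain ⟨hn₂, hg₂, hm₂, hb₂⟩ := floor_facts α₂ hα₂ (by linarith) j hj
  have tm₁ : ⌊((j:ℝ) - 1) * α₁⌋ - 1 ≤ ((⌊((j:ℝ) - 1) * α₁⌋ - 1).toNat : ℤ) :=
    Int.self_le_toNat _
  have tm₂ : ⌊((j:ℝ) - 1) * α₂⌋ - 1 ≤ ((⌊((j:ℝ) - 1) * α₂⌋ - 1).toNat : ℤ) :=
    Int.self_le_toNat _
  have tn₁ : (((⌊(j:ℝ) * α₁⌋ + 1).toNat) : ℤ) = ⌊(j:ℝ) * α₁⌋ + 1 :=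
    Int.toNat_of_nonneg (by omega)
  have tn₂ : (((⌊(j:ℝ) * α₂⌋ + 1).toNat) : ℤ) = ⌊(j:ℝ) * α₂⌋ + 1 :=
    Int.toNat_of_nonneg (by omega)
  have tl₁ : ((⌊((j:ℝ) - 1) * α₁⌋ - 1).toNat : ℤ) ≤ max (⌊((j:ℝ) - 1) * α₁⌋ - 1) 0 := by
    rw [Int.toNat_eq_max]
  have tl₂ : ((⌊((j:ℝ) - 1) * α₂⌋ - 1).toNat : ℤ) ≤ max (⌊((j:ℝ) - 1) * α₂⌋ - 1) 0 := by
    rw [Int.toNat_eq_max]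
  have h1 : ((Finset.Icc (⌊((j : ℝ) - 1) * α₁⌋ - 1).toNat (⌊(j : ℝ) * α₁⌋ + 1).toNat
      ×ˢ Finset.range (2 * j + 2))).card ≤ 6 * (2 * j + 2) := by
    rw [Finset.card_product, Nat.card_Icc, Finset.card_range]
    exact Nat.mul_le_mul_right _ (by omega)
  have h2 : ((Finset.range (2 * j + 2)
      ×ˢ Finset.Icc (⌊((j : ℝ) - 1) * α₂⌋ - 1).toNat (⌊(j : ℝ) * α₂⌋ + 1).toNat)).card
      ≤ (2 * j + 2) * 6 := by
    rw [Finset.card_product, Nat.card_Icc, Finset.card_range]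
    exact Nat.mul_le_mul_left _ (by omega)
  calc (gammaFin α₁ α₂ j).card ≤ _ + _ := Finset.card_union_le _ _
    _ ≤ 6 * (2 * j + 2) + (2 * j + 2) * 6 := Nat.add_le_add h1 h2
    _ ≤ 48 * j := by omega

/-- Bound on the blocks `f_j` under the two-microlocal coefficient estimate at
`x₀ = (a,b)` and rapid decay of the wavelet `ψ`. -/
theorem block_bound_of_two_microlocal
    (α₁ α₂ s a b : ℝ) (hα₁ : 0 < α₁) (hα₂ : 0 < α₂) (hsum : α₁ + α₂ = 2) (hs : 0 < s)
    (ψ : ℝ → ℝ)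
    (hψ : ∀ N : ℕ, ∃ CN > (0 : ℝ), ∀ u : ℝ, |ψ u| ≤ CN * (1 + |u|) ^ (-(N : ℝ)))
    (c : ℕ → ℕ → ℤ → ℤ → ℝ) (C : ℝ) (hC : 0 < C)
    (hcoef : ∀ (j₁ j₂ : ℕ) (k₁ k₂ : ℤ),
      |c j₁ j₂ k₁ k₂| ≤
        C * min ((2 : ℝ) ^ (-(j₁ : ℝ) * (s / α₁)) + |(k₁ : ℝ) / 2 ^ j₁ - a| ^ (s / α₁))
                ((2 : ℝ) ^ (-(j₂ : ℝ) * (s / α₂)) + |(k₂ : ℝ) / 2 ^ j₂ - b| ^ (s / α₂))) :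
    ∃ C' > (0 : ℝ), ∀ j : ℕ, 1 ≤ j → ∀ x : ℝ × ℝ,
      |blockSum α₁ α₂ ψ c j x| ≤
        C' * ((j : ℝ) * (2 : ℝ) ^ (-(j : ℝ) * s) +
              (j : ℝ) * |x.1 - a| ^ (s / α₁) + (j : ℝ) * |x.2 - b| ^ (s / α₂)) := by
  obtain ⟨B, hB, hTB⟩ := term_bound α₁ α₂ s a b hα₁ hα₂ hs ψ hψ c C hC hcoef
  refine ⟨48 * B, by positivity, fun j hj x => ?_⟩
  set D : ℝ := B * ((2:ℝ) ^ (-(j:ℝ) * s) + |x.1 - a| ^ (s / α₁) + |x.2 - b| ^ (s / α₂))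
    with hD
  have hDnn : 0 ≤ D := by
    apply mul_nonneg hB.le
    positivity
  set G : ℕ × ℕ → ℝ := fun q => ∑' k : ℤ × ℤ,
      Set.indicator (GammaSet α₁ α₂ j)
        (fun _ => c q.1 q.2 k.1 k.2 * ψ ((2 : ℝ) ^ q.1 * x.1 - k.1) *
          ψ ((2 : ℝ) ^ q.2 * x.2 - k.2)) q with hG
  have hblock : blockSum α₁ α₂ ψ c j x = ∑' q, G q := rfl
  have hGzero : ∀ q, q ∉ GammaSet α₁ α₂ j → G q = 0 := by
    intro q hq
    simp [hG, Set.indicator_of_notMem hq]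
  have hGbound : ∀ q ∈ gammaFin α₁ α₂ j, |G q| ≤ D := by
    intro q hqf
    by_cases hq : q ∈ GammaSet α₁ α₂ j
    · have hdis : ⌊((j:ℝ) - 1) * α₁⌋ - 1 ≤ (q.1:ℤ) ∨ ⌊((j:ℝ) - 1) * α₂⌋ - 1 ≤ (q.2:ℤ) := by
        rcases hq with ⟨h1,_,_⟩|⟨_,h2,_⟩|⟨h1,_,_,_⟩
        exacts [Or.inl h1, Or.inr h2, Or.inl h1]
      obtain ⟨hsumm, hle⟩ := hTB j hj q.1 q.2 hdis x
      have hGq : G q = ∑' k : ℤ × ℤ, c q.1 q.2 k.1 k.2 *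
          ψ ((2:ℝ) ^ q.1 * x.1 - k.1) * ψ ((2:ℝ) ^ q.2 * x.2 - k.2) := by
        simp only [hG, Set.indicator_of_mem hq]
      rw [hGq]
      have hns := norm_tsum_le_tsum_norm (f := fun k : ℤ × ℤ => c q.1 q.2 k.1 k.2 *
          ψ ((2:ℝ) ^ q.1 * x.1 - k.1) * ψ ((2:ℝ) ^ q.2 * x.2 - k.2))
        (by simpa only [Real.norm_eq_abs] using hsumm)
      calc |∑' k : ℤ × ℤ, c q.1 q.2 k.1 k.2 *
          ψ ((2:ℝ) ^ q.1 * x.1 - k.1) * ψ ((2:ℝ) ^ q.2 * x.2 - k.2)|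
          ≤ ∑' k : ℤ × ℤ, |c q.1 q.2 k.1 k.2 *
            ψ ((2:ℝ) ^ q.1 * x.1 - k.1) * ψ ((2:ℝ) ^ q.2 * x.2 - k.2)| := by
            simpa only [Real.norm_eq_abs] using hns
        _ ≤ D := hle
    · rw [hGzero q hq]
      simpa using hDnn
  have hnot : ∀ q ∉ gammaFin α₁ α₂ j, G q = 0 := fun q hq =>
    hGzero q (fun h => hq (gamma_subset α₁ α₂ hα₁ hα₂ hsum j hj q h))
  rw [hblock, tsum_eq_sum hnot]
  calc |∑ q ∈ gammaFin α₁ α₂ j, G q| ≤ ∑ q ∈ gammaFin α₁ α₂ j, |G q| :=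
        Finset.abs_sum_le_sum_abs _ _
    _ ≤ (gammaFin α₁ α₂ j).card • D := Finset.sum_le_card_nsmul _ _ _ hGbound
    _ = ((gammaFin α₁ α₂ j).card : ℝ) * D := nsmul_eq_mul _ _
    _ ≤ ((48 * j : ℕ) : ℝ) * D := by
        apply mul_le_mul_of_nonneg_right _ hDnn
        exact_mod_cast gamma_card α₁ α₂ hα₁ hα₂ hsum j hj
    _ = 48 * B * ((j : ℝ) * (2 : ℝ) ^ (-(j : ℝ) * s) +
          (j : ℝ) * |x.1 - a| ^ (s / α₁) + (j : ℝ) * |x.2 - b| ^ (s / α₂)) := by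
        rw [hD]; push_cast; ring
end
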